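/- arXiv:1110.6328 — 6 statements merged into one kernel-verified Lean document; each statement's English description precedes it below -/
import Mathlib

section
/- Let N ≥ 3 be an integer, t a real number, g > 0, and V : {1,…,N} → ℝ a real on-site potential. Let E_1 ≤ … ≤ E_N be the eigenvalues, listed in nondecreasing order, of the linear Hamiltonian H_0^P with periodic boundary conditions. Suppose ψ ∈ ℂ^N with ∑_{i=1}^N |ψ_i|² = 1 satisfies the stationary nonlinear Schrödinger equation t(ψ_{i+1} + ψ_{i−1}) + V_i ψ_i + g|ψ_i|²ψ_i = Eψ_i for all i with indices taken modulo N, for some real E. Then there exists n ∈ {1,…,N} with E_n ≤ E ≤ E_n + g; equivalently, E does not lie in the forbidden set Γ = (−∞,E_1) ∪ (E_1+g,E_2) ∪ … ∪ (E_{N−1}+g,E_N) ∪ (E_N+g,+∞). -/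
open Matrix Filter

noncomputable section

/-- Successor site with periodic boundary conditions (index mod `N`). -/
def pSucc {N : ℕ} (i : Fin N) : Fin N :=
  ⟨(i.1 + 1) % N, Nat.mod_lt _ (Nat.lt_of_le_of_lt (Nat.zero_le _) i.isLt)⟩

/-- Predecessor site with periodic boundary conditions (index mod `N`). -/
def pPred {N : ℕ} (i : Fin N) : Fin N :=
  ⟨(i.1 + (N - 1)) % N, Nat.mod_lt _ (Nat.lt_of_le_of_lt (Nat.zero_le _) i.isLt)⟩

/-- The linear Hamiltonian `H_0^P` with periodic boundary conditions:
`(H ψ)_i = t (ψ_{i+1} + ψ_{i-1}) + V_i ψ_i`, indices mod `N`. -/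
def periodicH (N : ℕ) (t : ℝ) (V : Fin N → ℝ) : Matrix (Fin N) (Fin N) ℂ :=
  Matrix.of fun i j =>
    (if j = pSucc i then (t : ℂ) else 0) + (if j = pPred i then (t : ℂ) else 0) +
      (if j = i then (V i : ℂ) else 0)

/-- The linear Hamiltonian `H_0^D` with Dirichlet boundary conditions
(convention `ψ_0 = ψ_{N+1} = 0`). -/
def dirichletH (N : ℕ) (t : ℝ) (V : Fin N → ℝ) : Matrix (Fin N) (Fin N) ℂ :=
  Matrix.of fun i j =>
    (if i.1 + 1 = j.1 then (t : ℂ) else 0) + (if j.1 + 1 = i.1 then (t : ℂ) else 0) +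
      (if j = i then (V i : ℂ) else 0)

/-- Sum of the neighboring values `ψ_{i+1} + ψ_{i-1}` with the Dirichlet
convention `ψ_0 = ψ_{N+1} = 0`. -/
def dNbr {N : ℕ} (ψ : Fin N → ℂ) (i : Fin N) : ℂ :=
  (if h : i.1 + 1 < N then ψ ⟨i.1 + 1, h⟩ else 0) +
    (if 0 < i.1 then ψ ⟨i.1 - 1, Nat.lt_of_le_of_lt (Nat.sub_le _ _) i.isLt⟩ else 0)

/-- The stationary nonlinear Schrödinger equation with periodic boundary conditions:
`t (ψ_{i+1} + ψ_{i-1}) + V_i ψ_i + g |ψ_i|² ψ_i = E ψ_i`, indices mod `N`. -/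
def PeriodicNLS (N : ℕ) (t g : ℝ) (V : Fin N → ℝ) (ψ : Fin N → ℂ) (E : ℝ) : Prop :=
  ∀ i : Fin N,
    (t : ℂ) * (ψ (pSucc i) + ψ (pPred i)) + (V i : ℂ) * ψ i +
        (g : ℂ) * ((‖ψ i‖ : ℂ)) ^ 2 * ψ i = (E : ℂ) * ψ i

/-- The stationary nonlinear Schrödinger equation with Dirichlet boundary conditions:
`t (ψ_{i+1} + ψ_{i-1}) + V_i ψ_i + g |ψ_i|² ψ_i = E ψ_i`, with `ψ_0 = ψ_{N+1} = 0`. -/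
def DirichletNLS (N : ℕ) (t g : ℝ) (V : Fin N → ℝ) (ψ : Fin N → ℂ) (E : ℝ) : Prop :=
  ∀ i : Fin N,
    (t : ℂ) * dNbr ψ i + (V i : ℂ) * ψ i +
        (g : ℂ) * ((‖ψ i‖ : ℂ)) ^ 2 * ψ i = (E : ℂ) * ψ i

/-- Normalization `∑ i |ψ_i|² = 1`. -/
def Normalized {N : ℕ} (ψ : Fin N → ℂ) : Prop :=
  ∑ i, ‖ψ i‖ ^ 2 = 1

/-- `e` lists the eigenvalues of the Hermitian matrix `A` in nondecreasing order,
counted with multiplicity. -/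
def IsSortedEigenvalues {N : ℕ} {A : Matrix (Fin N) (Fin N) ℂ} (hA : A.IsHermitian)
    (e : Fin N → ℝ) : Prop :=
  Monotone e ∧ ∃ σ : Equiv.Perm (Fin N), ∀ i, e i = hA.eigenvalues (σ i)

namespace NLSaux

open Matrix Complex Finset Module Submodule

variable {N : ℕ}

/-- Extension by zero from coordinates in `s`. -/
def extZero (s : Finset (Fin N)) : ({i // i ∈ s} → ℂ) →ₗ[ℂ] (Fin N → ℂ) where
  toFun c i := if h : i ∈ s then c ⟨i, h⟩ else 0
  map_add' c d := by funext i; by_cases h : i ∈ s <;> simp [h]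
  map_smul' a c := by funext i; by_cases h : i ∈ s <;> simp [h]

lemma extZero_inj (s : Finset (Fin N)) : Function.Injective (extZero s) := by
  intro c d h
  funext j
  have := congrFun h j.1
  simpa [extZero, j.2] using this

/-- Coordinate subspace: vectors supported on `s`. -/
def coordSub (s : Finset (Fin N)) : Submodule ℂ (Fin N → ℂ) :=
  LinearMap.range (extZero s)

lemma mem_coordSub {s : Finset (Fin N)} {x : Fin N → ℂ} :
    x ∈ coordSub s ↔ ∀ i ∉ s, x i = 0 := by
  constructor
  · rintro ⟨c, rfl⟩ i hi
    simp [extZero, hi]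
  · intro hx
    refine ⟨fun j => x j.1, ?_⟩
    funext i
    by_cases h : i ∈ s
    · simp [extZero, h]
    · simp [extZero, h, hx i h]

lemma finrank_coordSub (s : Finset (Fin N)) : finrank ℂ (coordSub s) = s.card := by
  rw [coordSub, LinearMap.finrank_range_of_inj (extZero_inj s),
    Module.finrank_fintype_fun_eq_card, Fintype.card_coe]

/-- The linear equivalence given by multiplying by a unitary matrix. -/
def uEquiv (U : Matrix (Fin N) (Fin N) ℂ) (hU : U ∈ Matrix.unitaryGroup (Fin N) ℂ) :
    (Fin N → ℂ) ≃ₗ[ℂ] (Fin N → ℂ) :=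
  LinearEquiv.ofLinear (Matrix.mulVecLin U) (Matrix.mulVecLin (star U))
    (by rw [← Matrix.mulVecLin_mul, Matrix.mem_unitaryGroup_iff.mp hU, Matrix.mulVecLin_one])
    (by rw [← Matrix.mulVecLin_mul, Matrix.mem_unitaryGroup_iff'.mp hU, Matrix.mulVecLin_one])

/-- Span of the eigenvectors (columns of the unitary `U`) indexed by `s`. -/
def eigSub (U : Matrix (Fin N) (Fin N) ℂ) (hU : U ∈ Matrix.unitaryGroup (Fin N) ℂ)
    (s : Finset (Fin N)) : Submodule ℂ (Fin N → ℂ) :=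
  (coordSub s).map (uEquiv U hU : (Fin N → ℂ) →ₗ[ℂ] (Fin N → ℂ))

lemma finrank_eigSub (U : Matrix (Fin N) (Fin N) ℂ) (hU : U ∈ Matrix.unitaryGroup (Fin N) ℂ)
    (s : Finset (Fin N)) : finrank ℂ (eigSub U hU s) = s.card := by
  rw [eigSub, LinearEquiv.finrank_map_eq, finrank_coordSub]

lemma eigSub_coords {U : Matrix (Fin N) (Fin N) ℂ} {hU : U ∈ Matrix.unitaryGroup (Fin N) ℂ}
    {s : Finset (Fin N)} {x : Fin N → ℂ} (hx : x ∈ eigSub U hU s) :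
    ∀ i ∉ s, (star U *ᵥ x) i = 0 := by
  obtain ⟨y, hy, rfl⟩ := hx
  intro i hi
  have h1 : (uEquiv U hU : (Fin N → ℂ) →ₗ[ℂ] (Fin N → ℂ)) y = U *ᵥ y := rfl
  rw [h1, Matrix.mulVec_mulVec, Matrix.mem_unitaryGroup_iff'.mp hU, Matrix.one_mulVec]
  exact mem_coordSub.mp hy i hi

lemma dot_self (x : Fin N → ℂ) :
    star x ⬝ᵥ x = ((∑ i, Complex.normSq (x i) : ℝ) : ℂ) := by
  push_cast
  simp only [dotProduct, Pi.star_apply]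
  refine Finset.sum_congr rfl fun i _ => ?_
  rw [RCLike.star_def, ← Complex.normSq_eq_conj_mul_self]

lemma diag_dot (d : Fin N → ℝ) (x : Fin N → ℂ) :
    star x ⬝ᵥ ((Matrix.diagonal (fun i => (d i : ℂ))) *ᵥ x)
      = ((∑ i, d i * Complex.normSq (x i) : ℝ) : ℂ) := by
  push_cast
  simp only [dotProduct, Pi.star_apply, Matrix.mulVec_diagonal]
  refine Finset.sum_congr rfl fun i _ => ?_
  rw [RCLike.star_def, mul_left_comm, ← Complex.normSq_eq_conj_mul_self]

lemma star_vecMul_eq (U : Matrix (Fin N) (Fin N) ℂ) (x : Fin N → ℂ) :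
    star x ᵥ* U = star (star U *ᵥ x) := by
  rw [Matrix.star_mulVec, Matrix.star_eq_conjTranspose, Matrix.conjTranspose_conjTranspose]

lemma spectral_dot (U : Matrix (Fin N) (Fin N) ℂ) (m : Fin N → ℝ) (x : Fin N → ℂ) :
    star x ⬝ᵥ ((U * Matrix.diagonal (fun i => (m i : ℂ)) * star U) *ᵥ x)
      = ((∑ i, m i * Complex.normSq ((star U *ᵥ x) i) : ℝ) : ℂ) := by
  have h : (U * Matrix.diagonal (fun i => (m i : ℂ)) * star U) *ᵥ x
      = U *ᵥ (Matrix.diagonal (fun i => (m i : ℂ)) *ᵥ (star U *ᵥ x)) := by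
    rw [Matrix.mulVec_mulVec, Matrix.mulVec_mulVec]
  rw [h, Matrix.dotProduct_mulVec, star_vecMul_eq]
  exact diag_dot m (star U *ᵥ x)

lemma unitary_norm {U : Matrix (Fin N) (Fin N) ℂ} (hU : U ∈ Matrix.unitaryGroup (Fin N) ℂ)
    (x : Fin N → ℂ) :
    ∑ i, Complex.normSq ((star U *ᵥ x) i) = ∑ i, Complex.normSq (x i) := by
  have h : star (star U *ᵥ x) ⬝ᵥ (star U *ᵥ x) = star x ⬝ᵥ x := by
    rw [← star_vecMul_eq, ← Matrix.dotProduct_mulVec, Matrix.mulVec_mulVec,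
      Matrix.mem_unitaryGroup_iff.mp hU, Matrix.one_mulVec]
  rw [dot_self, dot_self] at h
  exact_mod_cast h

lemma exists_normSq_pos {x : Fin N → ℂ} (hx : x ≠ 0) :
    ∃ i, 0 < Complex.normSq (x i) := by
  by_contra h
  push_neg at h
  apply hx
  funext i
  have h1 : Complex.normSq (x i) = 0 :=
    le_antisymm (h i) (Complex.normSq_nonneg _)
  simpa using Complex.normSq_eq_zero.mp h1

lemma helper_lt {m : Fin N → ℝ} {c : ℝ} {w : Fin N → ℂ} {s : Finset (Fin N)}
    (h0 : ∀ i ∉ s, w i = 0) (hm : ∀ i ∈ s, m i < c) (hw : w ≠ 0) :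
    ∑ i, m i * Complex.normSq (w i) < c * ∑ i, Complex.normSq (w i) := by
  rw [← sub_pos, Finset.mul_sum, ← Finset.sum_sub_distrib]
  obtain ⟨i₀, hi₀⟩ := exists_normSq_pos hw
  have hi₀s : i₀ ∈ s := by
    by_contra h
    rw [h0 i₀ h] at hi₀; simp at hi₀
  refine Finset.sum_pos' (fun i _ => ?_) ⟨i₀, Finset.mem_univ _, ?_⟩
  · by_cases h : i ∈ s
    · have := hm i h
      nlinarith [Complex.normSq_nonneg (w i)]
    · rw [h0 i h]; simp
  · have := hm i₀ hi₀s
    nlinarith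

lemma helper_gt {m : Fin N → ℝ} {c : ℝ} {w : Fin N → ℂ} {s : Finset (Fin N)}
    (h0 : ∀ i ∉ s, w i = 0) (hm : ∀ i ∈ s, c < m i) (hw : w ≠ 0) :
    c * ∑ i, Complex.normSq (w i) < ∑ i, m i * Complex.normSq (w i) := by
  have := helper_lt (m := fun i => -m i) (c := -c) h0 (fun i hi => by simpa using hm i hi) hw
  simp only [neg_mul] at this
  rw [Finset.sum_neg_distrib] at this
  linarith

lemma helper_le_upper {m : Fin N → ℝ} {c : ℝ} {w : Fin N → ℂ} {s : Finset (Fin N)}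
    (h0 : ∀ i ∉ s, w i = 0) (hm : ∀ i ∈ s, c ≤ m i) :
    c * ∑ i, Complex.normSq (w i) ≤ ∑ i, m i * Complex.normSq (w i) := by
  rw [← sub_nonneg, Finset.mul_sum, ← Finset.sum_sub_distrib]
  refine Finset.sum_nonneg fun i _ => ?_
  by_cases h : i ∈ s
  · have := hm i h
    nlinarith [Complex.normSq_nonneg (w i)]
  · rw [h0 i h]; simp

lemma helper_le_lower {m : Fin N → ℝ} {c : ℝ} {w : Fin N → ℂ} {s : Finset (Fin N)}
    (h0 : ∀ i ∉ s, w i = 0) (hm : ∀ i ∈ s, m i ≤ c) :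
    ∑ i, m i * Complex.normSq (w i) ≤ c * ∑ i, Complex.normSq (w i) := by
  have := helper_le_upper (m := fun i => -m i) (c := -c) h0 (fun i hi => by simpa using hm i hi)
  simp only [neg_mul] at this
  rw [Finset.sum_neg_distrib] at this
  linarith

end NLSaux


/-- Theorem 1 of the paper, periodic boundary conditions:
a normalized solution of the nonlinear Schrödinger equation with periodic boundary
conditions has eigenenergy `E` with `E_n ≤ E ≤ E_n + g` for some `n`, i.e. `E`
does not lie in the forbidden region `Γ`. -/
theorem stmt_0 (N : ℕ) (hN : 3 ≤ N) (t : ℝ) (g : ℝ) (hg : 0 < g) (V : Fin N → ℝ)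
    (hH : (periodicH N t V).IsHermitian) (e : Fin N → ℝ)
    (he : IsSortedEigenvalues hH e)
    (ψ : Fin N → ℂ) (hnorm : Normalized ψ) (E : ℝ)
    (hsol : PeriodicNLS N t g V ψ E) :
    ∃ n : Fin N, e n ≤ E ∧ E ≤ e n + g := by
  classical
  by_contra hcon
  push_neg at hcon
  obtain ⟨hmono, σ, hσ⟩ := he
  set lam := hH.eigenvalues with hlam
  -- gap hypothesis for the eigenvalues of the linear Hamiltonian
  have gap : ∀ i : Fin N, E < lam i ∨ lam i < E - g := by
    intro i
    have heq : e (σ.symm i) = lam i := by rw [hσ, Equiv.apply_symm_apply]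
    rcases le_or_gt (lam i) E with h1 | h1
    · right
      have := hcon (σ.symm i) (by rw [heq]; exact h1)
      rw [heq] at this
      linarith
    · left; exact h1
  have lam_ne : ∀ i, lam i ≠ E := by
    intro i hEq
    rcases gap i with h | h <;> (rw [hEq] at h; linarith)
  -- the nonlinear potential
  set d : Fin N → ℝ := fun i => g * ‖ψ i‖ ^ 2 with hd
  have hd_nonneg : ∀ i, 0 ≤ d i := fun i => by positivity
  have hd_le : ∀ i, d i ≤ g := by
    intro i
    have hn1 : ∑ j, ‖ψ j‖ ^ 2 = 1 := hnorm
    have h1 : ‖ψ i‖ ^ 2 ≤ 1 := by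
      rw [← hn1]
      exact Finset.single_le_sum (f := fun j => ‖ψ j‖ ^ 2)
        (fun j _ => by positivity) (Finset.mem_univ i)
    show g * ‖ψ i‖ ^ 2 ≤ g
    nlinarith
  set A := periodicH N t V with hA
  set D : Matrix (Fin N) (Fin N) ℂ := Matrix.diagonal (fun i => ((d i : ℝ) : ℂ)) with hD
  set B := A + D with hB
  have hDH : D.IsHermitian := by
    rw [hD, Matrix.isHermitian_diagonal_iff]
    intro i
    exact (Complex.conj_ofReal _)
  have hBH : B.IsHermitian := hH.add hDH
  -- ψ is an eigenvector of B with eigenvalue E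
  have hBψ : B *ᵥ ψ = (E : ℂ) • ψ := by
    funext i
    have hAψ : (A *ᵥ ψ) i
        = (t : ℂ) * ψ (pSucc i) + (t : ℂ) * ψ (pPred i) + (V i : ℂ) * ψ i := by
      simp [hA, periodicH, Matrix.mulVec, dotProduct, add_mul, ite_mul, zero_mul,
        Finset.sum_add_distrib, Finset.sum_ite_eq']
    have hDψ : (D *ᵥ ψ) i = ((d i : ℝ) : ℂ) * ψ i := Matrix.mulVec_diagonal _ _ _
    have hsum : (B *ᵥ ψ) i = (A *ᵥ ψ) i + (D *ᵥ ψ) i := by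
      rw [hB, Matrix.add_mulVec]; rfl
    have hnls := hsol i
    rw [hsum, hAψ, hDψ]
    have hcast : ((d i : ℝ) : ℂ) = (g : ℂ) * ((‖ψ i‖ : ℂ)) ^ 2 := by
      rw [hd]; push_cast; ring
    rw [hcast]
    simp only [Pi.smul_apply, smul_eq_mul]
    linear_combination hnls
  have hψ0 : ψ ≠ 0 := by
    intro h0
    have h1 : ∑ j, ‖ψ j‖ ^ 2 = 1 := hnorm
    rw [h0] at h1
    simp at h1
  -- spectral data
  set UA : Matrix (Fin N) (Fin N) ℂ := (hH.eigenvectorUnitary : Matrix (Fin N) (Fin N) ℂ)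
    with hUA
  have hUAmem : UA ∈ Matrix.unitaryGroup (Fin N) ℂ := hH.eigenvectorUnitary.2
  have hAspec : A = UA * Matrix.diagonal (fun i => ((lam i : ℝ) : ℂ)) * star UA :=
    hH.spectral_theorem
  set mu := hBH.eigenvalues with hmu
  set UB : Matrix (Fin N) (Fin N) ℂ := (hBH.eigenvectorUnitary : Matrix (Fin N) (Fin N) ℂ)
    with hUB
  have hUBmem : UB ∈ Matrix.unitaryGroup (Fin N) ℂ := hBH.eigenvectorUnitary.2
  have hBspec : B = UB * Matrix.diagonal (fun i => ((mu i : ℝ) : ℂ)) * star UB :=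
    hBH.spectral_theorem
  -- E is an eigenvalue of B
  have hEeig : ∃ j, mu j = E := by
    set y := star UB *ᵥ ψ with hy
    have hy0 : y ≠ 0 := by
      intro h0
      apply hψ0
      have : UB *ᵥ y = ψ := by
        rw [hy, Matrix.mulVec_mulVec, Matrix.mem_unitaryGroup_iff.mp hUBmem,
          Matrix.one_mulVec]
      rw [← this, h0, Matrix.mulVec_zero]
    have hmul : ∀ j, (mu j : ℂ) * y j = (E : ℂ) * y j := by
      intro j
      have h1 : star UB *ᵥ (B *ᵥ ψ) = Matrix.diagonal (fun i => ((mu i : ℝ) : ℂ)) *ᵥ y := by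
        rw [hBspec, hy]
        rw [Matrix.mulVec_mulVec, Matrix.mulVec_mulVec]
        congr 1
        rw [← Matrix.mul_assoc, ← Matrix.mul_assoc,
          Matrix.mem_unitaryGroup_iff'.mp hUBmem, Matrix.one_mul]
      have h2 : star UB *ᵥ (B *ᵥ ψ) = (E : ℂ) • y := by
        rw [hBψ, Matrix.mulVec_smul]
      have h3 := h1.symm.trans h2
      have h4 := congrFun h3 j
      simpa [Matrix.mulVec_diagonal] using h4
    obtain ⟨j, hj⟩ := Function.ne_iff.mp hy0
    refine ⟨j, ?_⟩
    have hj' : y j ≠ 0 := by simpa using hj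
    have h5 : (mu j : ℂ) = (E : ℂ) := mul_right_cancel₀ hj' (hmul j)
    exact_mod_cast h5
  obtain ⟨j₀, hj₀⟩ := hEeig
  -- the four index sets
  set sA1 : Finset (Fin N) := Finset.univ.filter (fun i => lam i < E) with hsA1
  set sA2 : Finset (Fin N) := Finset.univ.filter (fun i => E < lam i) with hsA2
  set sB1 : Finset (Fin N) := Finset.univ.filter (fun j => E ≤ mu j) with hsB1
  set sB2 : Finset (Fin N) := Finset.univ.filter (fun j => mu j ≤ E) with hsB2
  have hcardA : sA1.card + sA2.card = N := by
    have h1 := Finset.card_filter_add_card_filter_not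
      (s := Finset.univ) (p := fun i : Fin N => lam i < E)
    have h2 : Finset.univ.filter (fun i : Fin N => ¬ lam i < E) = sA2 := by
      apply Finset.filter_congr
      intro i _
      constructor
      · intro h; exact lt_of_le_of_ne (not_lt.mp h) (Ne.symm (lam_ne i))
      · intro h; exact not_lt.mpr (le_of_lt h)
    rw [h2] at h1
    simpa using h1
  have hcardB : N + 1 ≤ sB1.card + sB2.card := by
    have hunion : sB1 ∪ sB2 = Finset.univ := by
      apply Finset.eq_univ_of_forall
      intro j
      rcases le_total E (mu j) with h | h
      · exact Finset.mem_union_left _ (by simp [hsB1, h])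
      · exact Finset.mem_union_right _ (by simp [hsB2, h])
    have hinter : j₀ ∈ sB1 ∩ sB2 := by
      simp [hsB1, hsB2, hj₀]
    have h1 := Finset.card_union_add_card_inter sB1 sB2
    have h2 : (sB1 ∩ sB2).card ≥ 1 := Finset.card_pos.mpr ⟨j₀, hinter⟩
    have h3 : (sB1 ∪ sB2).card = N := by rw [hunion]; simp
    omega
  -- quadratic form computations
  have qf_A : ∀ x : Fin N → ℂ, star x ⬝ᵥ (A *ᵥ x)
      = ((∑ i, lam i * Complex.normSq ((star UA *ᵥ x) i) : ℝ) : ℂ) := by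
    intro x
    rw [hAspec]
    exact NLSaux.spectral_dot UA lam x
  have qf_B : ∀ x : Fin N → ℂ, star x ⬝ᵥ (B *ᵥ x)
      = ((∑ i, mu i * Complex.normSq ((star UB *ᵥ x) i) : ℝ) : ℂ) := by
    intro x
    rw [hBspec]
    exact NLSaux.spectral_dot UB mu x
  have qf_split : ∀ x : Fin N → ℂ,
      (∑ i, mu i * Complex.normSq ((star UB *ᵥ x) i))
        = (∑ i, lam i * Complex.normSq ((star UA *ᵥ x) i))
          + ∑ i, d i * Complex.normSq (x i) := by
    intro x
    have h1 : star x ⬝ᵥ (B *ᵥ x) = star x ⬝ᵥ (A *ᵥ x) + star x ⬝ᵥ (D *ᵥ x) := by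
      rw [hB, Matrix.add_mulVec, dotProduct_add]
    rw [qf_A x, qf_B x, NLSaux.diag_dot d x] at h1
    exact_mod_cast h1
  -- disjointness of the two pairs of subspaces
  have hdisj1 : Disjoint (NLSaux.eigSub UA hUAmem sA1) (NLSaux.eigSub UB hUBmem sB1) := by
    rw [Submodule.disjoint_def]
    intro x hx1 hx2
    by_contra hx0
    have hyA0 : star UA *ᵥ x ≠ 0 := by
      intro h0
      apply hx0
      have : UA *ᵥ (star UA *ᵥ x) = x := by
        rw [Matrix.mulVec_mulVec, Matrix.mem_unitaryGroup_iff.mp hUAmem, Matrix.one_mulVec]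
      rw [← this, h0, Matrix.mulVec_zero]
    have hnA := NLSaux.unitary_norm hUAmem x
    have hnB := NLSaux.unitary_norm hUBmem x
    have hlt : (∑ i, lam i * Complex.normSq ((star UA *ᵥ x) i))
        < (E - g) * ∑ i, Complex.normSq ((star UA *ᵥ x) i) := by
      apply NLSaux.helper_lt (NLSaux.eigSub_coords hx1) _ hyA0
      intro i hi
      rcases gap i with h | h
      · exfalso
        have : lam i < E := by
          have := Finset.mem_filter.mp hi
          exact this.2
        linarith
      · exact h
    have hD_le : (∑ i, d i * Complex.normSq (x i)) ≤ g * ∑ i, Complex.normSq (x i) := by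
      rw [Finset.mul_sum]
      apply Finset.sum_le_sum
      intro i _
      have := hd_le i
      nlinarith [Complex.normSq_nonneg (x i)]
    have hge : E * (∑ i, Complex.normSq ((star UB *ᵥ x) i))
        ≤ ∑ i, mu i * Complex.normSq ((star UB *ᵥ x) i) := by
      apply NLSaux.helper_le_upper (NLSaux.eigSub_coords hx2)
      intro i hi
      exact (Finset.mem_filter.mp hi).2
    have hsplit := qf_split x
    rw [hnA] at hlt
    rw [hnB] at hge
    linarith
  have hdisj2 : Disjoint (NLSaux.eigSub UA hUAmem sA2) (NLSaux.eigSub UB hUBmem sB2) := by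
    rw [Submodule.disjoint_def]
    intro x hx1 hx2
    by_contra hx0
    have hyA0 : star UA *ᵥ x ≠ 0 := by
      intro h0
      apply hx0
      have : UA *ᵥ (star UA *ᵥ x) = x := by
        rw [Matrix.mulVec_mulVec, Matrix.mem_unitaryGroup_iff.mp hUAmem, Matrix.one_mulVec]
      rw [← this, h0, Matrix.mulVec_zero]
    have hnA := NLSaux.unitary_norm hUAmem x
    have hnB := NLSaux.unitary_norm hUBmem x
    have hgt : E * (∑ i, Complex.normSq ((star UA *ᵥ x) i))
        < ∑ i, lam i * Complex.normSq ((star UA *ᵥ x) i) := by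
      apply NLSaux.helper_gt (NLSaux.eigSub_coords hx1) _ hyA0
      intro i hi
      exact (Finset.mem_filter.mp hi).2
    have hD_ge : 0 ≤ (∑ i, d i * Complex.normSq (x i)) := by
      apply Finset.sum_nonneg
      intro i _
      exact mul_nonneg (hd_nonneg i) (Complex.normSq_nonneg _)
    have hle : (∑ i, mu i * Complex.normSq ((star UB *ᵥ x) i))
        ≤ E * (∑ i, Complex.normSq ((star UB *ᵥ x) i)) := by
      apply NLSaux.helper_le_lower (NLSaux.eigSub_coords hx2)
      intro i hi
      exact (Finset.mem_filter.mp hi).2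
    have hsplit := qf_split x
    rw [hnA] at hgt
    rw [hnB] at hle
    linarith
  -- dimension counting
  have hrank : Module.finrank ℂ (Fin N → ℂ) = N := by
    rw [Module.finrank_fintype_fun_eq_card, Fintype.card_fin]
  have hle1 : sA1.card + sB1.card ≤ N := by
    have := Submodule.finrank_add_finrank_le_of_disjoint hdisj1
    rwa [NLSaux.finrank_eigSub, NLSaux.finrank_eigSub, hrank] at this
  have hle2 : sA2.card + sB2.card ≤ N := by
    have := Submodule.finrank_add_finrank_le_of_disjoint hdisj2
    rwa [NLSaux.finrank_eigSub, NLSaux.finrank_eigSub, hrank] at this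
  omega
end
end

section
/- Let N ≥ 3 be an integer, t a real number, g > 0, and V : {1,…,N} → ℝ a real on-site potential. Let E_1^D ≤ … ≤ E_N^D be the eigenvalues, listed in nondecreasing order, of the linear Hamiltonian H_0^D with Dirichlet boundary conditions. Suppose ψ ∈ ℂ^N with ∑_{i=1}^N |ψ_i|² = 1 satisfies the stationary nonlinear Schrödinger equation t(ψ_{i+1} + ψ_{i−1}) + V_i ψ_i + g|ψ_i|²ψ_i = Eψ_i for all i = 1,…,N with the convention ψ_0 = ψ_{N+1} = 0, for some real E. Then there exists n ∈ {1,…,N} with E_n^D ≤ E ≤ E_n^D + g. -/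
open Matrix Filter

noncomputable section

section AuxWeyl

open Finset

local notation "⟪" x ", " y "⟫" => @inner ℂ _ _ x y

lemma rc_coe (r : ℝ) : (RCLike.ofReal r : ℂ) = (r : ℂ) := rfl

lemma orth_inner_sum {ι : Type*} [Fintype ι] {E : Type*} [NormedAddCommGroup E]
    [InnerProductSpace ℂ E] {u : ι → E} (hu : Orthonormal ℂ u) (a b : ι → ℂ) :
    ⟪∑ j, a j • u j, ∑ j, b j • u j⟫ = ∑ j, starRingEnd ℂ (a j) * b j := by
  rw [sum_inner]
  refine Finset.sum_congr rfl fun i _ => ?_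
  rw [inner_smul_left, hu.inner_right_fintype]

lemma quad_le {ι : Type*} [Fintype ι] {E : Type*} [NormedAddCommGroup E]
    [InnerProductSpace ℂ E] {u : ι → E} (hu : Orthonormal ℂ u)
    (T : E →ₗ[ℂ] E) (μ : ι → ℝ) (hT : ∀ j, T (u j) = (μ j : ℂ) • u j)
    (c : ℝ) (hc : ∀ j, μ j ≤ c) {x : E} (hx : x ∈ Submodule.span ℂ (Set.range u)) :
    (⟪x, T x⟫).re ≤ c * ‖x‖ ^ 2 := by
  obtain ⟨l, rfl⟩ := (Submodule.mem_span_range_iff_exists_fun ℂ).mp hx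
  have hTx : T (∑ j, l j • u j) = ∑ j, (l j * (μ j : ℂ)) • u j := by
    rw [map_sum]
    refine Finset.sum_congr rfl fun j _ => ?_
    rw [_root_.map_smul, hT j, smul_smul]
  have h1 : ⟪∑ j, l j • u j, T (∑ j, l j • u j)⟫ = ∑ j, starRingEnd ℂ (l j) * (l j * (μ j : ℂ)) := by
    rw [hTx, orth_inner_sum hu]
  have h2 : ‖(∑ j, l j • u j : E)‖ ^ 2 = ∑ j, ‖l j‖ ^ 2 := by
    rw [← inner_self_eq_norm_sq (𝕜 := ℂ), orth_inner_sum hu]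
    rw [map_sum]
    refine Finset.sum_congr rfl fun j _ => ?_
    rw [RCLike.conj_mul, ← RCLike.ofReal_pow, RCLike.ofReal_re]
  rw [h1, h2, Complex.re_sum, Finset.mul_sum]
  refine Finset.sum_le_sum fun j _ => ?_
  rw [← mul_assoc, RCLike.conj_mul, ← RCLike.ofReal_pow]
  simp only [rc_coe]
  rw [← Complex.ofReal_mul, Complex.ofReal_re]
  nlinarith [hc j, sq_nonneg ‖l j‖]

lemma quad_ge {ι : Type*} [Fintype ι] {E : Type*} [NormedAddCommGroup E]
    [InnerProductSpace ℂ E] {u : ι → E} (hu : Orthonormal ℂ u)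
    (T : E →ₗ[ℂ] E) (μ : ι → ℝ) (hT : ∀ j, T (u j) = (μ j : ℂ) • u j)
    (c : ℝ) (hc : ∀ j, c ≤ μ j) {x : E} (hx : x ∈ Submodule.span ℂ (Set.range u)) :
    c * ‖x‖ ^ 2 ≤ (⟪x, T x⟫).re := by
  have h := quad_le hu (-T) (fun j => -(μ j)) (fun j => by
      simp only [LinearMap.neg_apply, hT j]
      push_cast
      rw [neg_smul]) (-c) (fun j => neg_le_neg (hc j)) hx
  simp only [LinearMap.neg_apply, inner_neg_right, Complex.neg_re] at h
  linarith


lemma eig_apply {N : ℕ} {A : Matrix (Fin N) (Fin N) ℂ} (hA : A.IsHermitian)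
    (σ : Equiv.Perm (Fin N)) (e : Fin N → ℝ) (hσ : ∀ i, e i = hA.eigenvalues (σ i)) (j : Fin N) :
    Matrix.toEuclideanLin A (hA.eigenvectorBasis (σ j)) = (e j : ℂ) • hA.eigenvectorBasis (σ j) := by
  have h := hA.mulVec_eigenvectorBasis (σ j)
  rw [Matrix.toEuclideanLin_apply]
  rw [hσ j]
  ext i
  have := congrFun h i
  simpa [Complex.real_smul] using this

lemma card_le_k {N : ℕ} (k : Fin N) : Fintype.card {j : Fin N // j ≤ k} = k.1 + 1 := by
  rw [Fintype.card_subtype]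
  have : Finset.filter (fun j => j ≤ k) Finset.univ = Finset.Iic k := by ext j; simp
  rw [this, Fin.card_Iic]

lemma card_ge_k {N : ℕ} (k : Fin N) : Fintype.card {j : Fin N // k ≤ j} = N - k.1 := by
  rw [Fintype.card_subtype]
  have : Finset.filter (fun j => k ≤ j) Finset.univ = Finset.Ici k := by ext j; simp
  rw [this, Fin.card_Ici]

lemma weyl {N : ℕ} {A B : Matrix (Fin N) (Fin N) ℂ} (hA : A.IsHermitian) (hB : B.IsHermitian)
    {e f : Fin N → ℝ} (he : IsSortedEigenvalues hA e) (hf : IsSortedEigenvalues hB f)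
    (g : ℝ)
    (hq : ∀ x : EuclideanSpace ℂ (Fin N),
      (⟪x, Matrix.toEuclideanLin B x⟫).re ≤ (⟪x, Matrix.toEuclideanLin A x⟫).re + g * ‖x‖ ^ 2)
    (k : Fin N) : f k ≤ e k + g := by
  obtain ⟨hem, σ, hσ⟩ := he
  obtain ⟨hfm, τ, hτ⟩ := hf
  set v : Fin N → EuclideanSpace ℂ (Fin N) := fun j => hA.eigenvectorBasis (σ j) with hv_def
  set w : Fin N → EuclideanSpace ℂ (Fin N) := fun j => hB.eigenvectorBasis (τ j) with hw_def
  have hv : Orthonormal ℂ v := hA.eigenvectorBasis.orthonormal.comp σ σ.injective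
  have hw : Orthonormal ℂ w := hB.eigenvectorBasis.orthonormal.comp τ τ.injective
  have hvS : Orthonormal ℂ (fun j : {j : Fin N // j ≤ k} => v j) :=
    hv.comp Subtype.val Subtype.val_injective
  have hwT : Orthonormal ℂ (fun j : {j : Fin N // k ≤ j} => w j) :=
    hw.comp Subtype.val Subtype.val_injective
  set S := Submodule.span ℂ (Set.range fun j : {j : Fin N // j ≤ k} => v j) with hS_def
  set T := Submodule.span ℂ (Set.range fun j : {j : Fin N // k ≤ j} => w j) with hT_def
  have hdimS : Module.finrank ℂ S = k.1 + 1 := by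
    rw [finrank_span_eq_card hvS.linearIndependent, card_le_k]
  have hdimT : Module.finrank ℂ T = N - k.1 := by
    rw [finrank_span_eq_card hwT.linearIndependent, card_ge_k]
  have hfull : Module.finrank ℂ (EuclideanSpace ℂ (Fin N)) = N := by
    simp [finrank_euclideanSpace]
  have hsup : Module.finrank ℂ ↥(S ⊔ T) ≤ N := by
    have := Submodule.finrank_le (S ⊔ T)
    rwa [hfull] at this
  have hint : 0 < Module.finrank ℂ ↥(S ⊓ T) := by
    have h := Submodule.finrank_sup_add_finrank_inf_eq S T
    rw [hdimS, hdimT] at h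
    have := k.isLt
    omega
  have : Nontrivial ↥(S ⊓ T) := Module.finrank_pos_iff.mp hint
  obtain ⟨x, hx_ne⟩ := exists_ne (0 : ↥(S ⊓ T))
  have hxS : (x : EuclideanSpace ℂ (Fin N)) ∈ S := x.2.1
  have hxT : (x : EuclideanSpace ℂ (Fin N)) ∈ T := x.2.2
  have hx0 : (x : EuclideanSpace ℂ (Fin N)) ≠ 0 := by
    simpa [Submodule.coe_eq_zero] using hx_ne
  have hA_up : (⟪(x : EuclideanSpace ℂ (Fin N)), Matrix.toEuclideanLin A x⟫).re
      ≤ e k * ‖(x : EuclideanSpace ℂ (Fin N))‖ ^ 2 :=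
    quad_le hvS (Matrix.toEuclideanLin A) (fun j => e j.1)
      (fun j => eig_apply hA σ e hσ j.1) (e k) (fun j => hem j.2) hxS
  have hB_lo : f k * ‖(x : EuclideanSpace ℂ (Fin N))‖ ^ 2
      ≤ (⟪(x : EuclideanSpace ℂ (Fin N)), Matrix.toEuclideanLin B x⟫).re :=
    quad_ge hwT (Matrix.toEuclideanLin B) (fun j => f j.1)
      (fun j => eig_apply hB τ f hτ j.1) (f k) (fun j => hfm j.2) hxT
  have hq' := hq x
  have hnorm_pos : 0 < ‖(x : EuclideanSpace ℂ (Fin N))‖ ^ 2 := by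
    have := norm_pos_iff.mpr hx0
    positivity
  nlinarith

lemma dirichletH_mulVec {N : ℕ} (t : ℝ) (V : Fin N → ℝ) (ψ : Fin N → ℂ) (i : Fin N) :
    (dirichletH N t V *ᵥ ψ) i = (t : ℂ) * dNbr ψ i + (V i : ℂ) * ψ i := by
  classical
  unfold dirichletH dNbr
  simp only [Matrix.mulVec, dotProduct, Matrix.of_apply]
  simp only [add_mul, Finset.sum_add_distrib]
  have h1 : ∑ j, (if i.1 + 1 = j.1 then (t : ℂ) else 0) * ψ j
      = (t : ℂ) * (if h : i.1 + 1 < N then ψ ⟨i.1 + 1, h⟩ else 0) := by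
    by_cases h : i.1 + 1 < N
    · rw [dif_pos h, Finset.sum_eq_single (⟨i.1 + 1, h⟩ : Fin N)]
      · simp
      · intro j _ hj
        rw [if_neg, zero_mul]
        intro hc
        exact hj (Fin.ext hc.symm)
      · simp
    · rw [dif_neg h, mul_zero]
      apply Finset.sum_eq_zero
      intro j _
      rw [if_neg, zero_mul]
      intro hc
      exact h (hc ▸ j.isLt)
  have h2 : ∑ j, (if j.1 + 1 = i.1 then (t : ℂ) else 0) * ψ j
      = (t : ℂ) * (if 0 < i.1 then ψ ⟨i.1 - 1, Nat.lt_of_le_of_lt (Nat.sub_le _ _) i.isLt⟩ else 0) := by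
    by_cases h : 0 < i.1
    · rw [if_pos h, Finset.sum_eq_single (⟨i.1 - 1, Nat.lt_of_le_of_lt (Nat.sub_le _ _) i.isLt⟩ : Fin N)]
      · rw [if_pos]
        show i.1 - 1 + 1 = i.1
        omega
      · intro j _ hj
        rw [if_neg, zero_mul]
        intro hc
        apply hj
        apply Fin.ext
        show j.1 = i.1 - 1
        omega
      · simp
    · rw [if_neg h, mul_zero]
      apply Finset.sum_eq_zero
      intro j _
      rw [if_neg, zero_mul]
      omega
  have h3 : ∑ j, (if j = i then (V i : ℂ) else 0) * ψ j = (V i : ℂ) * ψ i := by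
    rw [Finset.sum_eq_single i]
    · simp
    · intro j _ hj
      rw [if_neg hj, zero_mul]
    · simp
  rw [h1, h2, h3, mul_add]

lemma rc_coe' (r : ℝ) : (RCLike.ofReal r : ℂ) = (r : ℂ) := rfl

lemma euclid_norm_sq {N : ℕ} (x : EuclideanSpace ℂ (Fin N)) :
    ‖x‖ ^ 2 = ∑ i, ‖x i‖ ^ 2 := by
  rw [← inner_self_eq_norm_sq (𝕜 := ℂ), PiLp.inner_apply, map_sum]
  refine Finset.sum_congr rfl fun i _ => ?_
  rw [RCLike.inner_apply, RCLike.mul_conj, ← RCLike.ofReal_pow, RCLike.ofReal_re]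

lemma diag_quad {N : ℕ} (c : Fin N → ℝ) (x : EuclideanSpace ℂ (Fin N)) :
    (⟪x, Matrix.toEuclideanLin (Matrix.diagonal fun i => ((c i : ℝ) : ℂ)) x⟫).re
      = ∑ i, c i * ‖x i‖ ^ 2 := by
  rw [Matrix.toEuclideanLin_apply, PiLp.inner_apply, Complex.re_sum]
  refine Finset.sum_congr rfl fun i _ => ?_
  have hy : (WithLp.toLp 2
      ((Matrix.diagonal fun i => ((c i : ℝ) : ℂ)) *ᵥ WithLp.ofLp x)) i
      = (c i : ℂ) * x i := by
    simp [Matrix.mulVec_diagonal]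
  rw [RCLike.inner_apply, hy]
  have : ((c i : ℂ) * x i) * (starRingEnd ℂ) (x i) = (c i : ℂ) * (x i * (starRingEnd ℂ) (x i)) := by
    ring
  rw [this, RCLike.mul_conj, ← RCLike.ofReal_pow]
  simp only [rc_coe']
  rw [← Complex.ofReal_mul, Complex.ofReal_re]

lemma exists_eigenvalue_eq {N : ℕ} {B : Matrix (Fin N) (Fin N) ℂ} (hB : B.IsHermitian)
    {ψ : Fin N → ℂ} (hψ : ψ ≠ 0) {E : ℝ} (hEψ : B *ᵥ ψ = (E : ℂ) • ψ) :
    ∃ j, hB.eigenvalues j = E := by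
  classical
  have hker : (B - (E : ℂ) • 1) *ᵥ ψ = 0 := by
    rw [Matrix.sub_mulVec, hEψ, Matrix.smul_mulVec, Matrix.one_mulVec, sub_self]
  have hdet : (B - (E : ℂ) • 1).det = 0 :=
    (Matrix.exists_mulVec_eq_zero_iff).mp ⟨ψ, hψ, hker⟩
  set U : Matrix (Fin N) (Fin N) ℂ := (hB.eigenvectorUnitary : Matrix (Fin N) (Fin N) ℂ) with hU_def
  have hUU : U * star U = 1 := by
    have := hB.eigenvectorUnitary.2
    rw [Unitary.mem_iff] at this
    exact this.2
  have key : B - (E : ℂ) • 1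
      = U * (Matrix.diagonal fun j => ((hB.eigenvalues j : ℂ) - E)) * star U := by
    conv_lhs => rw [hB.spectral_theorem]
    rw [Unitary.conjStarAlgAut_apply, ← hU_def]
    have h1 : ((E : ℂ) • (1 : Matrix (Fin N) (Fin N) ℂ)) = U * ((E : ℂ) • 1) * star U := by
      rw [Matrix.mul_smul, Matrix.mul_one, Matrix.smul_mul, hUU]
    rw [h1, ← Matrix.sub_mul, ← Matrix.mul_sub]
    congr 1
    congr 1
    rw [Matrix.smul_one_eq_diagonal, Matrix.diagonal_sub]
    rfl
  rw [key, Matrix.det_mul, Matrix.det_mul] at hdet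
  have hdetU : U.det * (star U).det = 1 := by
    rw [← Matrix.det_mul, hUU, Matrix.det_one]
  have hDdet : (Matrix.diagonal fun j => ((hB.eigenvalues j : ℂ) - E)).det = 0 := by
    have h := hdet
    have : U.det * (Matrix.diagonal fun j => ((hB.eigenvalues j : ℂ) - E)).det * (star U).det
        = (Matrix.diagonal fun j => ((hB.eigenvalues j : ℂ) - E)).det * (U.det * (star U).det) := by
      ring
    rw [this, hdetU, mul_one] at h
    exact h
  rw [Matrix.det_diagonal] at hDdet
  obtain ⟨j, _, hj⟩ := Finset.prod_eq_zero_iff.mp hDdet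
  refine ⟨j, ?_⟩
  have : (hB.eigenvalues j : ℂ) = (E : ℂ) := by linear_combination hj
  exact_mod_cast this

end AuxWeyl

/-- Theorem 1 of the paper, Dirichlet boundary conditions:
a normalized solution of the nonlinear Schrödinger equation with Dirichlet boundary
conditions has eigenenergy `E` with `E_n^D ≤ E ≤ E_n^D + g` for some `n`. -/
theorem stmt_1 (N : ℕ) (hN : 3 ≤ N) (t : ℝ) (g : ℝ) (hg : 0 < g) (V : Fin N → ℝ)
    (hH : (dirichletH N t V).IsHermitian) (e : Fin N → ℝ)
    (he : IsSortedEigenvalues hH e)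
    (ψ : Fin N → ℂ) (hnorm : Normalized ψ) (E : ℝ)
    (hsol : DirichletNLS N t g V ψ E) :
    ∃ n : Fin N, e n ≤ E ∧ E ≤ e n + g := by
  classical
  set d : Fin N → ℝ := fun i => ‖ψ i‖ ^ 2 with hd_def
  have hd0 : ∀ i, 0 ≤ d i := fun i => by positivity
  have hdsum : ∑ i, d i = 1 := hnorm
  have hd1 : ∀ i, d i ≤ 1 := by
    intro i
    rw [← hdsum]
    exact Finset.single_le_sum (f := d) (fun j _ => hd0 j) (Finset.mem_univ i)
  set A := dirichletH N t V with hA_def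
  set B := A + Matrix.diagonal (fun i => ((g * d i : ℝ) : ℂ)) with hB_def
  have hBH : B.IsHermitian := by
    refine hH.add (Matrix.isHermitian_diagonal_of_self_adjoint _ ?_)
    funext i
    simp [Pi.star_apply, Complex.conj_ofReal]
  have hBψ : B *ᵥ ψ = (E : ℂ) • ψ := by
    funext i
    rw [Matrix.add_mulVec, Pi.add_apply, dirichletH_mulVec, Matrix.mulVec_diagonal]
    have hco : ((g * d i : ℝ) : ℂ) = (g : ℂ) * ((‖ψ i‖ : ℂ)) ^ 2 := by
      rw [hd_def]
      push_cast
      ring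
    rw [hco, Pi.smul_apply, smul_eq_mul]
    linear_combination hsol i
  have hψ0 : ψ ≠ 0 := by
    intro h
    rw [Normalized, h] at hnorm
    simp at hnorm
  obtain ⟨j, hj⟩ := exists_eigenvalue_eq hBH hψ0 hBψ
  set τ := Tuple.sort hBH.eigenvalues with hτ_def
  set f : Fin N → ℝ := hBH.eigenvalues ∘ τ with hf_def
  have hf : IsSortedEigenvalues hBH f := ⟨Tuple.monotone_sort _, τ, fun i => rfl⟩
  set k := τ⁻¹ j with hk_def
  have hfk : f k = E := by
    rw [hf_def, hk_def]
    simp only [Function.comp_apply]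
    rw [show τ (τ⁻¹ j) = j from τ.apply_symm_apply j]
    exact hj
  have hquad : ∀ x : EuclideanSpace ℂ (Fin N),
      (inner ℂ x (Matrix.toEuclideanLin B x)).re
        = (inner ℂ x (Matrix.toEuclideanLin A x)).re + ∑ i, (g * d i) * ‖x i‖ ^ 2 := by
    intro x
    rw [hB_def, map_add, LinearMap.add_apply, inner_add_right, Complex.add_re,
      diag_quad (fun i => g * d i)]
  have hkey1 : ∀ x : EuclideanSpace ℂ (Fin N),
      (inner ℂ x (Matrix.toEuclideanLin B x)).re
        ≤ (inner ℂ x (Matrix.toEuclideanLin A x)).re + g * ‖x‖ ^ 2 := by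
    intro x
    rw [hquad x, euclid_norm_sq, Finset.mul_sum]
    gcongr with i _
    have := sq_nonneg ‖x i‖
    nlinarith [hd0 i, hd1 i]
  have hkey2 : ∀ x : EuclideanSpace ℂ (Fin N),
      (inner ℂ x (Matrix.toEuclideanLin A x)).re
        ≤ (inner ℂ x (Matrix.toEuclideanLin B x)).re + 0 * ‖x‖ ^ 2 := by
    intro x
    rw [hquad x, zero_mul, add_zero]
    have : 0 ≤ ∑ i, (g * d i) * ‖x i‖ ^ 2 := by
      apply Finset.sum_nonneg
      intro i _
      exact mul_nonneg (mul_nonneg hg.le (hd0 i)) (sq_nonneg _)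
    linarith
  have h1 : f k ≤ e k + g := weyl hH hBH he hf g hkey1 k
  have h2 : e k ≤ f k := by
    have := weyl hBH hH hf he 0 hkey2 k
    linarith
  exact ⟨k, by linarith [hfk, h2], by linarith [hfk, h1]⟩
end
end

section
/- Let N ≥ 3 be an integer, t, g real numbers, and V : {1,…,N} → ℝ. Suppose ψ ∈ ℂ^N with ∑_{i=1}^N |ψ_i|² = 1 satisfies t(ψ_{i+1} + ψ_{i−1}) + V_i ψ_i + g|ψ_i|²ψ_i = Eψ_i for all i = 1,…,N with the Dirichlet convention ψ_0 = ψ_{N+1} = 0, for some real E. Let σ(H_0^P) be the spectrum of the linear Hamiltonian with periodic boundary conditions and set U_max = max_{1 ≤ i ≤ N} |ψ_i|². Then dist(E, σ(H_0^P)) ≤ |g|·U_max + |t|·√(|ψ_1|² + |ψ_N|²). -/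
open Matrix Filter

noncomputable section

private theorem spec_bound' {N : ℕ} {A : Matrix (Fin N) (Fin N) ℂ} (hA : A.IsHermitian)
    (ψ : EuclideanSpace ℂ (Fin N)) (hψ : ‖ψ‖ = 1) (E : ℝ) :
    Metric.infDist E (Set.range hA.eigenvalues) ≤ ‖Matrix.toEuclideanLin A ψ - (E : ℂ) • ψ‖ := by
  set b := hA.eigenvectorBasis with hb
  set r : EuclideanSpace ℂ (Fin N) := Matrix.toEuclideanLin A ψ - (E : ℂ) • ψ with hr
  have hsym : (Matrix.toEuclideanLin A).IsSymmetric := Matrix.isHermitian_iff_isSymmetric.mp hA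
  have hAv : ∀ i, Matrix.toEuclideanLin A (b i) = (hA.eigenvalues i : ℂ) • (b i) := by
    intro i
    ext j
    have := congrFun (hA.mulVec_eigenvectorBasis i) j
    simpa [Matrix.toEuclideanLin_apply] using this
  have key : ∀ i, b.repr r i = ((hA.eigenvalues i : ℂ) - E) * b.repr ψ i := by
    intro i
    have h1 : b.repr r i = inner ℂ (b i) r := b.repr_apply_apply r i
    have h2 : b.repr ψ i = inner ℂ (b i) ψ := b.repr_apply_apply ψ i
    rw [h1, h2, hr, inner_sub_right, inner_smul_right]
    have : (inner ℂ (b i) (Matrix.toEuclideanLin A ψ) : ℂ)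
        = (hA.eigenvalues i : ℂ) * inner ℂ (b i) ψ := by
      rw [← hsym (b i) ψ, hAv i, inner_smul_left]
      simp [Complex.conj_ofReal]
    rw [this]; ring
  set d := Metric.infDist (E : ℝ) (Set.range hA.eigenvalues) with hd
  have hd0 : 0 ≤ d := Metric.infDist_nonneg
  have hdle : ∀ i, d ≤ |hA.eigenvalues i - E| := by
    intro i
    have := Metric.infDist_le_dist_of_mem (x := (E:ℝ)) (Set.mem_range_self (f := hA.eigenvalues) i)
    rwa [Real.dist_eq, abs_sub_comm] at this
  have hnr : ‖r‖ ^ 2 = ∑ i, ‖b.repr r i‖ ^ 2 := by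
    rw [← b.repr.norm_map r, PiLp.norm_sq_eq_of_L2]
  have hnψ : (∑ i, ‖b.repr ψ i‖ ^ 2) = 1 := by
    rw [← PiLp.norm_sq_eq_of_L2, b.repr.norm_map, hψ]; norm_num
  have hsq : d ^ 2 ≤ ‖r‖ ^ 2 := by
    calc d ^ 2 = ∑ i, d ^ 2 * ‖b.repr ψ i‖ ^ 2 := by
          rw [← Finset.mul_sum, hnψ, mul_one]
      _ ≤ ∑ i, ‖b.repr r i‖ ^ 2 := by
          apply Finset.sum_le_sum
          intro i _
          rw [key i]
          have hcast : ((hA.eigenvalues i : ℂ) - E) = ((hA.eigenvalues i - E : ℝ) : ℂ) := by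
            push_cast; ring
          rw [norm_mul, mul_pow, hcast, Complex.norm_real, Real.norm_eq_abs]
          have := hdle i
          gcongr
      _ = ‖r‖ ^ 2 := hnr.symm
  nlinarith [norm_nonneg r]

private theorem boundary_id' (N : ℕ) (hN : 3 ≤ N) (t : ℝ) (ψ : Fin N → ℂ) (i : Fin N) :
    (t:ℂ) * (ψ (pSucc i) + ψ (pPred i)) - (t:ℂ) * dNbr ψ i
      = (if i = (⟨0, Nat.lt_of_lt_of_le (Nat.zero_lt_succ 2) hN⟩ : Fin N) then (t:ℂ) * ψ ⟨N-1, Nat.sub_lt (Nat.lt_of_lt_of_le (Nat.zero_lt_succ 2) hN) Nat.one_pos⟩ else 0) +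
        (if i = (⟨N-1, Nat.sub_lt (Nat.lt_of_lt_of_le (Nat.zero_lt_succ 2) hN) Nat.one_pos⟩ : Fin N) then (t:ℂ) * ψ ⟨0, Nat.lt_of_lt_of_le (Nat.zero_lt_succ 2) hN⟩ else 0) := by
  have F : ∀ (a b : ℕ) (ha : a < N) (hb : b < N), a = b → ψ ⟨a, ha⟩ = ψ ⟨b, hb⟩ := by
    rintro a b ha hb rfl; rfl
  obtain ⟨iv, hlt⟩ := i
  simp only [pSucc, pPred, dNbr, Fin.mk.injEq]
  rcases eq_or_ne iv 0 with h0 | h0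
  · subst h0
    rw [F ((0+1) % N) 1 _ (by omega) (by rw [Nat.mod_eq_of_lt (by omega)]),
        F ((0+(N-1)) % N) (N-1) _ (by omega) (by rw [Nat.mod_eq_of_lt (by omega)]; omega),
        dif_pos (show 0+1 < N by omega), F (0+1) 1 _ (by omega) (by omega),
        if_neg (by omega), if_pos rfl, if_neg (by omega)]
    ring
  · rcases eq_or_ne iv (N-1) with hl | hl
    · subst hl
      rw [F ((N-1+1) % N) 0 _ (by omega)
            (by rw [show N-1+1 = N by omega, Nat.mod_self]),
          F ((N-1+(N-1)) % N) (N-1-1) _ (by omega)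
            (by rw [show N-1+(N-1) = N + (N-1-1) by omega, Nat.add_mod_left,
                 Nat.mod_eq_of_lt (by omega)]),
          dif_neg (by omega), if_pos (by omega), if_neg (by omega), if_pos rfl]
      ring
    · rw [F ((iv+1) % N) (iv+1) _ (by omega) (by rw [Nat.mod_eq_of_lt (by omega)]),
          F ((iv+(N-1)) % N) (iv-1) _ (by omega)
            (by rw [show iv+(N-1) = N + (iv-1) by omega, Nat.add_mod_left,
                 Nat.mod_eq_of_lt (by omega)]),
          dif_pos (show iv+1 < N by omega), if_pos (by omega), if_neg h0, if_neg hl]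
      ring

/-- key estimate (13) of the paper: a normalized Dirichlet solution
with eigenenergy `E` satisfies
`dist(E, σ(H_0^P)) ≤ |g|·U_max + |t|·√(|ψ_1|² + |ψ_N|²)`. -/
theorem stmt_7 (N : ℕ) (hN : 3 ≤ N) (t g : ℝ) (V : Fin N → ℝ)
    (hH : (periodicH N t V).IsHermitian)
    (ψ : Fin N → ℂ) (hnorm : Normalized ψ) (E : ℝ)
    (hsol : DirichletNLS N t g V ψ E) :
    Metric.infDist E (Set.range hH.eigenvalues) ≤
      |g| * (⨆ i : Fin N, ‖ψ i‖ ^ 2) +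
        |t| * Real.sqrt (‖ψ ⟨0, by omega⟩‖ ^ 2 +
          ‖ψ ⟨N - 1, by omega⟩‖ ^ 2) := by
    classical
  have h0N : 0 < N := by omega
  set A := periodicH N t V with hAdef
  set i0 : Fin N := ⟨0, by omega⟩ with hi0
  set il : Fin N := ⟨N-1, by omega⟩ with hil
  have hne : i0 ≠ il := by simp only [hi0, hil, ne_eq, Fin.mk.injEq]; omega
  set ψE : EuclideanSpace ℂ (Fin N) := (WithLp.equiv 2 (Fin N → ℂ)).symm ψ with hψEdef
  have hψEi : ∀ i, ψE i = ψ i := fun i => rfl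
  have hnorm1 : ‖ψE‖ = 1 := by
    rw [EuclideanSpace.norm_eq]
    have h1 : ∑ i, ‖ψE i‖ ^ 2 = 1 := by
      simpa [hψEi, Normalized] using hnorm
    rw [h1, Real.sqrt_one]
  set u : EuclideanSpace ℂ (Fin N) :=
    (WithLp.equiv 2 (Fin N → ℂ)).symm
      (fun i => -((g:ℂ) * ((‖ψ i‖ : ℂ)) ^ 2 * ψ i)) with hudef
  set v : EuclideanSpace ℂ (Fin N) :=
    (WithLp.equiv 2 (Fin N → ℂ)).symm (fun i =>
      (if i = i0 then (t:ℂ) * ψ il else 0) + (if i = il then (t:ℂ) * ψ i0 else 0)) with hvdef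
  have hui : ∀ i, u i = -((g:ℂ) * ((‖ψ i‖ : ℂ)) ^ 2 * ψ i) := fun i => rfl
  have hvi : ∀ i, v i =
      (if i = i0 then (t:ℂ) * ψ il else 0) + (if i = il then (t:ℂ) * ψ i0 else 0) :=
    fun i => rfl
  have hres : Matrix.toEuclideanLin A ψE - (E:ℂ) • ψE = u + v := by
    ext i
    have hmv : (A *ᵥ ψ) i = (t:ℂ) * ψ (pSucc i) + (t:ℂ) * ψ (pPred i) + (V i : ℂ) * ψ i := by
      simp [hAdef, periodicH, Matrix.mulVec, dotProduct, add_mul, Finset.sum_add_distrib,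
        Finset.sum_ite_eq', ite_mul]
    have hlhs : (Matrix.toEuclideanLin A ψE - (E:ℂ) • ψE) i = (A *ᵥ ψ) i - (E:ℂ) * ψ i := by
      simp only [PiLp.sub_apply, PiLp.smul_apply, smul_eq_mul]
      congr 1
    have hrhs : (u + v) i = u i + v i := rfl
    rw [hlhs, hrhs, hui, hvi, hmv]
    have hbd := boundary_id' N hN t ψ i
    have hs := hsol i
    rw [show (⟨0, by omega⟩ : Fin N) = i0 from rfl, show (⟨N-1, by omega⟩ : Fin N) = il from rfl]
      at hbd
    linear_combination hbd + hs
  set U := ⨆ i : Fin N, ‖ψ i‖ ^ 2 with hUdef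
  have hUb : ∀ i, ‖ψ i‖ ^ 2 ≤ U := by
    intro i
    rw [hUdef]
    exact le_ciSup (f := fun j : Fin N => ‖ψ j‖ ^ 2)
      (Set.Finite.bddAbove (Set.finite_range _)) i
  have hU0 : 0 ≤ U := le_trans (sq_nonneg _) (hUb i0)
  have hunorm : ‖u‖ ≤ |g| * U := by
    rw [EuclideanSpace.norm_eq]
    have hbound : ∀ i : Fin N, ‖u i‖ ^ 2 ≤ (|g| * U) ^ 2 * ‖ψ i‖ ^ 2 := by
      intro i
      have h1 : ‖u i‖ = |g| * ‖ψ i‖ ^ 2 * ‖ψ i‖ := by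
        rw [hui]
        simp [norm_mul, Complex.norm_real, abs_of_nonneg
          (norm_nonneg (ψ i)), abs_pow, sq_abs]
      rw [h1]
      have h2 := hUb i
      have h3 : (0:ℝ) ≤ ‖ψ i‖ := norm_nonneg _
      have h4 : ‖ψ i‖ ^ 2 * ‖ψ i‖ ^ 2 ≤ U * U :=
        mul_le_mul h2 h2 (sq_nonneg _) hU0
      calc (|g| * ‖ψ i‖ ^ 2 * ‖ψ i‖) ^ 2
          = (g ^ 2 * ‖ψ i‖ ^ 2) *
              (‖ψ i‖ ^ 2 * ‖ψ i‖ ^ 2) := by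
            rw [← sq_abs g]; ring
        _ ≤ (g ^ 2 * ‖ψ i‖ ^ 2) * (U * U) :=
            mul_le_mul_of_nonneg_left h4 (by positivity)
        _ = (|g| * U) ^ 2 * ‖ψ i‖ ^ 2 := by rw [← sq_abs g]; ring
    calc Real.sqrt (∑ i, ‖u i‖ ^ 2)
        ≤ Real.sqrt (∑ i, (|g| * U) ^ 2 * ‖ψ i‖ ^ 2) :=
          Real.sqrt_le_sqrt (Finset.sum_le_sum fun i _ => hbound i)
      _ = Real.sqrt ((|g| * U) ^ 2) := by rw [← Finset.mul_sum, hnorm, mul_one]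
      _ = |g| * U := Real.sqrt_sq (by positivity)
  have hvnorm : ‖v‖ = |t| * Real.sqrt (‖ψ i0‖ ^ 2 + ‖ψ il‖ ^ 2) := by
    rw [EuclideanSpace.norm_eq]
    have hptw : ∀ i : Fin N, ‖v i‖ ^ 2 =
        (if i = i0 then t ^ 2 * ‖ψ il‖ ^ 2 else 0) +
          (if i = il then t ^ 2 * ‖ψ i0‖ ^ 2 else 0) := by
      intro i
      rw [hvi]
      by_cases h1 : i = i0
      · rw [if_pos h1, if_pos h1, if_neg (h1 ▸ hne), if_neg (h1 ▸ hne)]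
        rw [add_zero, add_zero, norm_mul, mul_pow, Complex.norm_real, Real.norm_eq_abs,
          sq_abs]
      · by_cases h2 : i = il
        · rw [if_neg h1, if_pos h2, if_neg h1, if_pos h2]
          rw [zero_add, zero_add, norm_mul, mul_pow, Complex.norm_real, Real.norm_eq_abs,
            sq_abs]
        · simp [h1, h2]
    have hsum : ∑ i, ‖v i‖ ^ 2
        = t ^ 2 * (‖ψ i0‖ ^ 2 + ‖ψ il‖ ^ 2) := by
      rw [Finset.sum_congr rfl (fun i _ => hptw i), Finset.sum_add_distrib,
        Finset.sum_ite_eq' Finset.univ i0, Finset.sum_ite_eq' Finset.univ il]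
      simp; ring
    rw [hsum, Real.sqrt_mul (sq_nonneg t), Real.sqrt_sq_eq_abs]
  calc Metric.infDist (E:ℝ) (Set.range hH.eigenvalues)
      ≤ ‖Matrix.toEuclideanLin A ψE - (E:ℂ) • ψE‖ := spec_bound' hH ψE hnorm1 E
    _ = ‖u + v‖ := by rw [hres]
    _ ≤ ‖u‖ + ‖v‖ := norm_add_le _ _
    _ ≤ |g| * U + |t| * Real.sqrt (‖ψ i0‖ ^ 2 + ‖ψ il‖ ^ 2) := by
        rw [hvnorm]; exact add_le_add_left hunorm _
end
end

section
/- Let N ≥ 3 be an integer, t, g real numbers, and V : {1,…,N} → ℝ. Suppose ψ ∈ ℂ^N with ∑_{i=1}^N |ψ_i|² = 1 satisfies t(ψ_{i+1} + ψ_{i−1}) + V_i ψ_i + g|ψ_i|²ψ_i = Eψ_i for all i with indices taken modulo N (periodic boundary condition), for some real E. Let σ(H_0^P) be the spectrum of the linear Hamiltonian with periodic boundary conditions and set U_max = max_{1 ≤ i ≤ N} |ψ_i|². Then dist(E, σ(H_0^P)) ≤ |g|·U_max. -/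
open Matrix Filter

noncomputable section

/-- key estimate of Theorem 2, periodic boundary conditions:
a normalized periodic solution with eigenenergy `E` satisfies
`dist(E, σ(H_0^P)) ≤ |g|·U_max`. -/
theorem stmt_8 (N : ℕ) (hN : 3 ≤ N) (t g : ℝ) (V : Fin N → ℝ)
    (hH : (periodicH N t V).IsHermitian)
    (ψ : Fin N → ℂ) (hnorm : Normalized ψ) (E : ℝ)
    (hsol : PeriodicNLS N t g V ψ E) :
    Metric.infDist E (Set.range hH.eigenvalues) ≤
      |g| * (⨆ i : Fin N, ‖ψ i‖ ^ 2) := by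
  classical
  have hNpos : 0 < N := by omega
  set A := periodicH N t V with hAdef
  set U : ℝ := ⨆ i : Fin N, ‖ψ i‖ ^ 2 with hUdef
  have hUle : ∀ i, ‖ψ i‖ ^ 2 ≤ U := fun i =>
    le_ciSup (f := fun j => ‖ψ j‖ ^ 2) (Set.Finite.bddAbove (Set.finite_range _)) i
  have hU0 : 0 ≤ U := le_trans (sq_nonneg _) (hUle ⟨0, hNpos⟩)
  -- mulVec formula
  have hmv : ∀ i, (A *ᵥ ψ) i
      = (t:ℂ) * ψ (pSucc i) + (t:ℂ) * ψ (pPred i) + (V i : ℂ) * ψ i := by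
    intro i
    simp only [hAdef, periodicH, mulVec, dotProduct, Matrix.of_apply, add_mul, ite_mul,
      zero_mul, Finset.sum_add_distrib, Finset.sum_ite_eq', Finset.mem_univ, if_true]
  have hres : ∀ i, (A *ᵥ ψ) i - (E:ℂ) * ψ i
      = -((g:ℂ) * ((‖ψ i‖ : ℂ)) ^ 2 * ψ i) := by
    intro i
    rw [hmv i]
    linear_combination hsol i
  -- Euclidean space setup
  set φ : EuclideanSpace ℂ (Fin N) := (WithLp.equiv 2 _).symm ψ with hφdef
  set T := Matrix.toEuclideanLin A with hTdef
  set r : EuclideanSpace ℂ (Fin N) := T φ - (E:ℂ) • φ with hrdef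
  have hφcoord : ∀ i, φ i = ψ i := fun i => rfl
  have hrcoord : ∀ i, r i = (A *ᵥ ψ) i - (E:ℂ) * ψ i := by
    intro i
    simp [hrdef, hTdef, hφdef, Matrix.toEuclideanLin_apply, smul_eq_mul]
  have hφnormc : ∀ i, ‖φ i‖ = ‖ψ i‖ := by
    intro i; rw [hφcoord i]
  have hφnorm : ∑ i, ‖φ i‖ ^ 2 = 1 := by
    simp only [hφnormc]; exact hnorm
  -- norm bound on r
  have hrbound : ‖r‖ ^ 2 ≤ (|g| * U) ^ 2 := by
    rw [PiLp.norm_sq_eq_of_L2]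
    have key : ∀ i : Fin N, ‖r i‖ ^ 2 ≤ (|g| * U) ^ 2 * ‖φ i‖ ^ 2 := by
      intro i
      have hri : ‖r i‖ = |g| * (‖ψ i‖ ^ 2 * ‖ψ i‖) := by
        rw [hrcoord i, hres i]
        simp [_root_.map_mul, Complex.norm_real, abs_of_nonneg,
          AbsoluteValue.nonneg, sq_abs, mul_assoc]
      have h1 : ‖r i‖ ≤ (|g| * U) * ‖φ i‖ := by
        rw [hri, hφnormc i]
        have h0 := hUle i
        have habs : (0:ℝ) ≤ ‖ψ i‖ := norm_nonneg _
        calc |g| * (‖ψ i‖ ^ 2 * ‖ψ i‖)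
            ≤ |g| * (U * ‖ψ i‖) :=
              mul_le_mul_of_nonneg_left (mul_le_mul_of_nonneg_right h0 habs) (abs_nonneg g)
          _ = |g| * U * ‖ψ i‖ := by ring
      have h2 := pow_le_pow_left₀ (norm_nonneg _) h1 2
      calc ‖r i‖ ^ 2 ≤ ((|g| * U) * ‖φ i‖) ^ 2 := h2
        _ = (|g| * U) ^ 2 * ‖φ i‖ ^ 2 := by ring
    calc ∑ i, ‖r i‖ ^ 2 ≤ ∑ i, (|g| * U) ^ 2 * ‖φ i‖ ^ 2 := Finset.sum_le_sum fun i _ => key i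
      _ = (|g| * U) ^ 2 * ∑ i, ‖φ i‖ ^ 2 := by rw [Finset.mul_sum]
      _ = (|g| * U) ^ 2 := by rw [hφnorm, mul_one]
  -- spectral side
  set b := hH.eigenvectorBasis with hbdef
  set e := hH.eigenvalues with hedef
  set d := Metric.infDist (E:ℝ) (Set.range e) with hddef
  have hd0 : 0 ≤ d := Metric.infDist_nonneg
  have hdle : ∀ i, d ≤ |E - e i| := by
    intro i
    have h := Metric.infDist_le_dist_of_mem (x := (E:ℝ)) (Set.mem_range_self (f := e) i)
    rwa [Real.dist_eq] at h
  have hsym : (Matrix.toEuclideanLin A).IsSymmetric :=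
    Matrix.isHermitian_iff_isSymmetric.mp hH
  have hTb : ∀ i, T (b i) = (e i : ℂ) • b i := by
    intro i
    have h := hH.mulVec_eigenvectorBasis i
    ext j
    have : (T (b i)) j = (A *ᵥ ⇑(b i)) j := by
      simp [hTdef, Matrix.toEuclideanLin_apply]
    rw [this, h]
    simp [Complex.real_smul]
    rfl
  have hreprT : ∀ i, b.repr (T φ) i = (e i : ℂ) * b.repr φ i := by
    intro i
    rw [OrthonormalBasis.repr_apply_apply, OrthonormalBasis.repr_apply_apply,
      ← hsym (b i) φ, hTb i, inner_smul_left]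
    simp [Complex.conj_ofReal]
  have hreprr : ∀ i, b.repr r i = ((e i : ℂ) - E) * b.repr φ i := by
    intro i
    have hsm : b.repr ((E:ℂ) • φ) = (E:ℂ) • b.repr φ := b.repr.map_smul _ _
    rw [hrdef, map_sub, PiLp.sub_apply, hsm, PiLp.smul_apply, hreprT i, smul_eq_mul]
    ring
  have hreprnorm : ∑ i, ‖b.repr φ i‖ ^ 2 = 1 := by
    have : ‖b.repr φ‖ = ‖φ‖ := b.repr.norm_map φ
    have h2 : ‖b.repr φ‖ ^ 2 = ‖φ‖ ^ 2 := by rw [this]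
    rw [PiLp.norm_sq_eq_of_L2, PiLp.norm_sq_eq_of_L2] at h2
    rw [h2, hφnorm]
  have hlow : d ^ 2 ≤ ‖r‖ ^ 2 := by
    have : ‖r‖ ^ 2 = ∑ i, ‖b.repr r i‖ ^ 2 := by
      rw [← PiLp.norm_sq_eq_of_L2, b.repr.norm_map]
    rw [this]
    calc d ^ 2 = d ^ 2 * ∑ i, ‖b.repr φ i‖ ^ 2 := by rw [hreprnorm, mul_one]
      _ = ∑ i, d ^ 2 * ‖b.repr φ i‖ ^ 2 := by rw [Finset.mul_sum]
      _ ≤ ∑ i, ‖b.repr r i‖ ^ 2 := by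
          apply Finset.sum_le_sum
          intro i _
          rw [hreprr i]
          have hc : ‖((e i : ℂ) - E)‖ = |e i - E| := by
            rw [show ((e i : ℂ) - E) = ((e i - E : ℝ) : ℂ) by push_cast; ring]
            rw [Complex.norm_real, Real.norm_eq_abs]
          have : ‖((e i : ℂ) - E) * b.repr φ i‖ = |e i - E| * ‖b.repr φ i‖ := by
            rw [norm_mul, hc]
          rw [this, mul_pow]
          have hle : d ≤ |e i - E| := by rw [abs_sub_comm]; exact hdle i
          have := pow_le_pow_left₀ hd0 hle 2
          nlinarith [sq_nonneg (‖b.repr φ i‖), norm_nonneg (b.repr φ i)]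
  have hfinal : d ^ 2 ≤ (|g| * U) ^ 2 := le_trans hlow hrbound
  have hgU : 0 ≤ |g| * U := mul_nonneg (abs_nonneg g) hU0
  have h := Real.sqrt_le_sqrt hfinal
  rwa [Real.sqrt_sq hd0, Real.sqrt_sq hgU] at h
end
end

section
/- Fix real numbers t and g. Let N : ℕ → ℕ with N(k) ≥ 3 for all k, and for each k let V^(k) : {1,…,N(k)} → ℝ be a potential, H_0^P(k) the corresponding linear Hamiltonian with periodic boundary conditions, and ψ^(k) ∈ ℂ^{N(k)} a normalized solution (∑_i |ψ^(k)_i|² = 1) of the stationary nonlinear Schrödinger equation with Dirichlet boundary conditions and eigenenergy E^(k) ∈ ℝ. If U_max^(k) := max_i |ψ^(k)_i|² → 0 as k → ∞, then dist(E^(k), σ(H_0^P(k))) → 0 as k → ∞. -/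
open Matrix Filter

noncomputable section

lemma enorm_sq {n : ℕ} (x : EuclideanSpace ℂ (Fin n)) : ‖x‖ ^ 2 = ∑ i, ‖x i‖ ^ 2 := by
  rw [EuclideanSpace.norm_eq, Real.sq_sqrt]; positivity

lemma key_bound {n : ℕ} {A : Matrix (Fin n) (Fin n) ℂ} (hA : A.IsHermitian)
    (ψ : Fin n → ℂ) (hψ : ∑ i, ‖ψ i‖ ^ 2 = 1) (E : ℝ) :
    Metric.infDist (E : ℝ) (Set.range hA.eigenvalues) ≤
      Real.sqrt (∑ i, ‖A.mulVec ψ i - (E : ℂ) * ψ i‖ ^ 2) := by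
  have hn : Nonempty (Fin n) := by
    rcases isEmpty_or_nonempty (Fin n) with h | h
    · simp [Finset.univ_eq_empty] at hψ
    · exact h
  set d := Metric.infDist (E : ℝ) (Set.range hA.eigenvalues) with hd
  have hd0 : 0 ≤ d := Metric.infDist_nonneg
  set b := hA.eigenvectorBasis with hb
  set ψ' : EuclideanSpace ℂ (Fin n) := (WithLp.equiv 2 (Fin n → ℂ)).symm ψ with hψ'
  set v : Fin n → ℂ := A.mulVec ψ - (E : ℂ) • ψ with hv
  set v' : EuclideanSpace ℂ (Fin n) := (WithLp.equiv 2 (Fin n → ℂ)).symm v with hv'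
  -- inner (b i) with A *ᵥ x
  have hinner : ∀ i : Fin n, b.repr v' i = ((hA.eigenvalues i : ℂ) - E) * b.repr ψ' i := by
    intro i
    have h1 : star (⇑(b i)) ᵥ* A = (hA.eigenvalues i : ℂ) • star (⇑(b i)) := by
      have := star_mulVec A (⇑(b i))
      rw [hA.eq] at this
      rw [← this, hA.mulVec_eigenvectorBasis, star_smul]
      simp [Complex.star_def, Complex.conj_ofReal, hb]
    rw [OrthonormalBasis.repr_apply_apply, OrthonormalBasis.repr_apply_apply,
      EuclideanSpace.inner_eq_star_dotProduct, EuclideanSpace.inner_eq_star_dotProduct]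
    have hveq : v'.ofLp = v := by simp [hv']
    have hpeq : ψ'.ofLp = ψ := by simp [hψ']
    rw [dotProduct_comm v'.ofLp, dotProduct_comm ψ'.ofLp, hveq, hpeq, hv]
    rw [dotProduct_sub, dotProduct_mulVec, h1, smul_dotProduct, dotProduct_smul]
    simp only [smul_eq_mul]; ring
  -- norms
  have hnormψ : ∑ i, ‖b.repr ψ' i‖ ^ 2 = 1 := by
    have : ∑ i, ‖b.repr ψ' i‖ ^ 2 = ‖b.repr ψ'‖ ^ 2 := (enorm_sq _).symm
    rw [this, b.repr.norm_map, enorm_sq]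
    simpa [hψ'] using hψ
  have hnormv : ∑ i, ‖A.mulVec ψ i - (E:ℂ) * ψ i‖ ^ 2 = ∑ i, ‖b.repr v' i‖ ^ 2 := by
    have h2 : ∑ i, ‖b.repr v' i‖ ^ 2 = ‖b.repr v'‖ ^ 2 := (enorm_sq _).symm
    rw [h2, b.repr.norm_map, enorm_sq]
    apply Finset.sum_congr rfl
    intro i _
    simp [hv', hv, smul_eq_mul]
  have hkey : d ^ 2 ≤ ∑ i, ‖A.mulVec ψ i - (E:ℂ) * ψ i‖ ^ 2 := by
    rw [hnormv]
    calc d ^ 2 = ∑ i, d ^ 2 * ‖b.repr ψ' i‖ ^ 2 := by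
          rw [← Finset.mul_sum, hnormψ, mul_one]
      _ ≤ ∑ i, ‖b.repr v' i‖ ^ 2 := by
          apply Finset.sum_le_sum
          intro i _
          rw [hinner i]
          have hdi : d ≤ |E - hA.eigenvalues i| := by
            have := Metric.infDist_le_dist_of_mem (x := (E:ℝ)) (Set.mem_range_self (f := hA.eigenvalues) i)
            rwa [Real.dist_eq] at this
          have : d ^ 2 ≤ |E - hA.eigenvalues i| ^ 2 := by
            apply pow_le_pow_left₀ hd0 hdi
          calc d ^ 2 * ‖b.repr ψ' i‖ ^ 2 ≤ |E - hA.eigenvalues i| ^ 2 * ‖b.repr ψ' i‖ ^ 2 := by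
                apply mul_le_mul_of_nonneg_right this (by positivity)
            _ = ‖((hA.eigenvalues i : ℂ) - E) * b.repr ψ' i‖ ^ 2 := by
                rw [norm_mul, mul_pow]
                congr 1
                rw [← Complex.ofReal_sub, Complex.norm_real, Real.norm_eq_abs, ← sq_abs, abs_sub_comm, abs_abs]
  calc d = Real.sqrt (d ^ 2) := by rw [Real.sqrt_sq hd0]
    _ ≤ _ := Real.sqrt_le_sqrt hkey


lemma periodicH_mulVec {n : ℕ} (t : ℝ) (V : Fin n → ℝ) (ψ : Fin n → ℂ) (i : Fin n) :
    (periodicH n t V).mulVec ψ i =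
      (t : ℂ) * ψ (pSucc i) + (t : ℂ) * ψ (pPred i) + (V i : ℂ) * ψ i := by
  simp [periodicH, Matrix.mulVec, dotProduct, add_mul, ite_mul, Finset.sum_add_distrib]

lemma residual_eq {n : ℕ} (t g : ℝ) (hn : 3 ≤ n) (V : Fin n → ℝ) (ψ : Fin n → ℂ) (E : ℝ)
    (hsol : DirichletNLS n t g V ψ E) (i : Fin n) :
    (periodicH n t V).mulVec ψ i - (E : ℂ) * ψ i =
      -(g : ℂ) * ((‖ψ i‖ : ℂ)) ^ 2 * ψ i +
        (if i = (⟨0, by omega⟩ : Fin n) then (t : ℂ) * ψ ⟨n - 1, by omega⟩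
          else if i = (⟨n - 1, by omega⟩ : Fin n) then (t : ℂ) * ψ ⟨0, by omega⟩ else 0) := by
  have hE := hsol i
  rw [periodicH_mulVec, ← hE]
  by_cases h0 : i = (⟨0, by omega⟩ : Fin n)
  · subst h0
    rw [if_pos rfl]
    have hs : pSucc (⟨0, by omega⟩ : Fin n) = ⟨1, by omega⟩ := by
      apply Fin.ext
      show (0 + 1) % n = 1
      rw [Nat.mod_eq_of_lt (by omega)]
    have hp : pPred (⟨0, by omega⟩ : Fin n) = ⟨n - 1, by omega⟩ := by
      apply Fin.ext
      show (0 + (n - 1)) % n = n - 1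
      rw [Nat.mod_eq_of_lt (by omega)]
      omega
    have hd : dNbr ψ (⟨0, by omega⟩ : Fin n) = ψ ⟨1, by omega⟩ := by
      have h1 : (0:ℕ) + 1 < n := by omega
      simp only [dNbr, Fin.val_mk]
      rw [dif_pos h1, if_neg (lt_irrefl 0)]
      simp only [add_zero]
    rw [hs, hp, hd]; ring
  · rw [if_neg h0]
    by_cases hN : i = (⟨n - 1, by omega⟩ : Fin n)
    · subst hN
      rw [if_pos rfl]
      have hs : pSucc (⟨n - 1, by omega⟩ : Fin n) = ⟨0, by omega⟩ := by
        apply Fin.ext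
        show (n - 1 + 1) % n = 0
        have : n - 1 + 1 = n := by omega
        rw [this, Nat.mod_self]
      have hp : pPred (⟨n - 1, by omega⟩ : Fin n) = ⟨n - 2, by omega⟩ := by
        apply Fin.ext
        show (n - 1 + (n - 1)) % n = n - 2
        have : n - 1 + (n - 1) = (n - 2) + 1 * n := by omega
        rw [this, Nat.add_mul_mod_self_right]
        exact Nat.mod_eq_of_lt (by omega)
      have hd : dNbr ψ (⟨n - 1, by omega⟩ : Fin n) = ψ ⟨n - 2, by omega⟩ := by
        have h1 : ¬ (n - 1 + 1 < n) := by omega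
        have h2 : 0 < n - 1 := by omega
        simp only [dNbr, Fin.val_mk]
        simp only [h1, dite_false, dif_neg, if_pos h2, zero_add]
        exact congrArg ψ (Fin.ext (show n - 1 - 1 = n - 2 by omega))
      rw [hs, hp, hd]; ring
    · rw [if_neg hN]
      have h0' : 0 < i.1 := by
        rcases Nat.eq_zero_or_pos i.1 with h | h
        · exact absurd (Fin.ext h) h0
        · exact h
      have hN' : i.1 + 1 < n := by
        rcases Nat.lt_or_ge (i.1 + 1) n with h | h
        · exact h
        · exact absurd (Fin.ext (by omega : i.1 = n - 1)) hN
      have hs : pSucc i = ⟨i.1 + 1, hN'⟩ := by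
        apply Fin.ext
        exact Nat.mod_eq_of_lt hN'
      have hp : pPred i = ⟨i.1 - 1, by omega⟩ := by
        apply Fin.ext
        show (i.1 + (n - 1)) % n = i.1 - 1
        have : i.1 + (n - 1) = (i.1 - 1) + 1 * n := by omega
        rw [this, Nat.add_mul_mod_self_right]
        exact Nat.mod_eq_of_lt (by omega)
      have hd : dNbr ψ i = ψ ⟨i.1 + 1, hN'⟩ + ψ ⟨i.1 - 1, by omega⟩ := by
        simp only [dNbr, dif_pos hN', if_pos h0']
      rw [hs, hp, hd]; ring


/-- Theorem 2 of the paper, Dirichlet boundary conditions: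
for a sequence of normalized Dirichlet solutions with `U_max^(k) → 0`
(critical or extended states), the distance of the eigenenergies to the spectrum
of the linear periodic Hamiltonian tends to zero. -/
theorem stmt_11 (t g : ℝ) (N : ℕ → ℕ) (hN : ∀ k, 3 ≤ N k)
    (V : ∀ k, Fin (N k) → ℝ) (ψ : ∀ k, Fin (N k) → ℂ) (E : ℕ → ℝ)
    (hH : ∀ k, (periodicH (N k) t (V k)).IsHermitian)
    (hnorm : ∀ k, Normalized (ψ k))
    (hsol : ∀ k, DirichletNLS (N k) t g (V k) (ψ k) (E k))
    (hU : Tendsto (fun k => ⨆ i : Fin (N k), ‖ψ k i‖ ^ 2) atTop (nhds 0)) :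
    Tendsto (fun k => Metric.infDist (E k) (Set.range (hH k).eigenvalues)) atTop (nhds 0) := by
  classical
  set U : ℕ → ℝ := fun k => ⨆ i : Fin (N k), ‖ψ k i‖ ^ 2 with hUdef
  have hUge : ∀ k (i : Fin (N k)), ‖ψ k i‖ ^ 2 ≤ U k := by
    intro k i
    exact le_ciSup (f := fun i : Fin (N k) => ‖ψ k i‖ ^ 2)
      (Set.Finite.bddAbove (Set.finite_range _)) i
  have hU0 : ∀ k, 0 ≤ U k := fun k =>
    le_trans (by positivity) (hUge k ⟨0, by have := hN k; omega⟩)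
  have hbound : ∀ k, Metric.infDist (E k) (Set.range (hH k).eigenvalues) ≤
      Real.sqrt (2 * g ^ 2 * (U k) ^ 2 + 4 * t ^ 2 * (U k)) := by
    intro k
    refine le_trans (key_bound (hH k) (ψ k)
      (show ∑ i, ‖ψ k i‖ ^ 2 = 1 from hnorm k) (E k)) (Real.sqrt_le_sqrt ?_)
    have hn : 3 ≤ N k := hN k
    set n := N k with hnk
    set i0 : Fin n := ⟨0, by omega⟩ with hi0
    set iN : Fin n := ⟨n - 1, by omega⟩ with hiN
    have hne : i0 ≠ iN := by
      intro h
      have := congrArg Fin.val h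
      simp only [hi0, hiN] at this
      omega
    have hres := residual_eq t g hn (V k) (ψ k) (E k) (hsol k)
    have hpt : ∀ i : Fin n,
        ‖(periodicH n t (V k)).mulVec (ψ k) i - ((E k : ℝ) : ℂ) * ψ k i‖ ^ 2 ≤
          2 * g ^ 2 * (U k) ^ 2 * (‖ψ k i‖ ^ 2) +
            ((if i = i0 then 2 * t ^ 2 * U k else 0) +
              (if i = iN then 2 * t ^ 2 * U k else 0)) := by
      intro i
      rw [hres i]
      set z := ψ k i with hz
      set a : ℂ := -(g : ℂ) * ((‖z‖ : ℂ)) ^ 2 * z with ha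
      have hu : ‖z‖ ^ 2 ≤ U k := hUge k i
      have hu0 : (0:ℝ) ≤ ‖z‖ ^ 2 := by positivity
      have hA2 : ‖a‖ ^ 2 = g ^ 2 * (‖z‖ ^ 2) ^ 2 * ‖z‖ ^ 2 := by
        rw [ha, neg_mul, neg_mul, norm_neg, norm_mul, norm_mul,
          norm_pow, Complex.norm_real, Complex.norm_real, norm_norm, Real.norm_eq_abs,
          mul_pow, mul_pow, sq_abs]
      have hA2' : ‖a‖ ^ 2 ≤ g ^ 2 * (U k) ^ 2 * ‖z‖ ^ 2 := by
        rw [hA2]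
        have h2 : (‖z‖ ^ 2) ^ 2 ≤ (U k) ^ 2 :=
          pow_le_pow_left₀ hu0 hu 2
        exact mul_le_mul_of_nonneg_right
          (mul_le_mul_of_nonneg_left h2 (sq_nonneg g)) hu0
      by_cases h0 : i = i0
      · rw [if_pos h0, if_pos h0, if_neg (h0 ▸ hne)]
        set b : ℂ := (t : ℂ) * ψ k iN with hb
        have hB2 : ‖b‖ ^ 2 = t ^ 2 * ‖ψ k iN‖ ^ 2 := by
          rw [hb, norm_mul, Complex.norm_real, Real.norm_eq_abs, mul_pow, sq_abs]
        have hB2' : ‖b‖ ^ 2 ≤ t ^ 2 * U k := by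
          rw [hB2]
          nlinarith [sq_nonneg t, hUge k iN]
        have htri : ‖a + b‖ ≤ ‖a‖ + ‖b‖ :=
          norm_add_le a b
        have hS0 : (0:ℝ) ≤ ‖a + b‖ := norm_nonneg _
        have hA0 : (0:ℝ) ≤ ‖a‖ := norm_nonneg _
        have hB0 : (0:ℝ) ≤ ‖b‖ := norm_nonneg _
        have h1 : ‖a + b‖ ^ 2 ≤ (‖a‖ + ‖b‖) ^ 2 :=
          pow_le_pow_left₀ hS0 htri 2
        nlinarith [sq_nonneg (‖a‖ - ‖b‖)]
      · rw [if_neg h0, if_neg h0]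
        by_cases hN' : i = iN
        · rw [if_pos hN', if_pos hN']
          set b : ℂ := (t : ℂ) * ψ k i0 with hb
          have hB2 : ‖b‖ ^ 2 = t ^ 2 * ‖ψ k i0‖ ^ 2 := by
            rw [hb, norm_mul, Complex.norm_real, Real.norm_eq_abs, mul_pow, sq_abs]
          have hB2' : ‖b‖ ^ 2 ≤ t ^ 2 * U k := by
            rw [hB2]
            nlinarith [sq_nonneg t, hUge k i0]
          have htri : ‖a + b‖ ≤ ‖a‖ + ‖b‖ :=
            norm_add_le a b
          have hS0 : (0:ℝ) ≤ ‖a + b‖ := norm_nonneg _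
          have hA0 : (0:ℝ) ≤ ‖a‖ := norm_nonneg _
          have hB0 : (0:ℝ) ≤ ‖b‖ := norm_nonneg _
          have h1 : ‖a + b‖ ^ 2 ≤ (‖a‖ + ‖b‖) ^ 2 :=
            pow_le_pow_left₀ hS0 htri 2
          nlinarith [sq_nonneg (‖a‖ - ‖b‖)]
        · rw [if_neg hN', if_neg hN', add_zero, add_zero, add_zero]
          nlinarith [hA2']
    calc ∑ i, ‖(periodicH n t (V k)).mulVec (ψ k) i - ((E k : ℝ) : ℂ) * ψ k i‖ ^ 2
        ≤ ∑ i : Fin n, (2 * g ^ 2 * (U k) ^ 2 * (‖ψ k i‖ ^ 2) +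
            ((if i = i0 then 2 * t ^ 2 * U k else 0) +
              (if i = iN then 2 * t ^ 2 * U k else 0))) :=
          Finset.sum_le_sum fun i _ => hpt i
      _ = 2 * g ^ 2 * (U k) ^ 2 * (∑ i : Fin n, ‖ψ k i‖ ^ 2)
            + (2 * t ^ 2 * U k + 2 * t ^ 2 * U k) := by
          rw [Finset.sum_add_distrib, Finset.sum_add_distrib, ← Finset.mul_sum]
          congr 1
          · congr 1 <;> simp [Finset.sum_ite_eq']
      _ = 2 * g ^ 2 * (U k) ^ 2 + 4 * t ^ 2 * U k := by
          rw [show (∑ i : Fin n, ‖ψ k i‖ ^ 2) = 1 from hnorm k]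
          ring
  have hF : Tendsto (fun k => 2 * g ^ 2 * (U k) ^ 2 + 4 * t ^ 2 * (U k)) atTop (nhds 0) := by
    have h1 : Tendsto (fun k => (U k) ^ 2) atTop (nhds 0) := by
      have := hU.mul hU
      simpa [pow_two] using this
    have h2 := (tendsto_const_nhds (x := 2 * g ^ 2) (f := atTop)).mul h1
    have h3 := (tendsto_const_nhds (x := 4 * t ^ 2) (f := atTop)).mul hU
    simpa using h2.add h3
  have hsq : Tendsto (fun k => Real.sqrt (2 * g ^ 2 * (U k) ^ 2 + 4 * t ^ 2 * (U k)))
      atTop (nhds 0) := by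
    have := (Real.continuous_sqrt.tendsto 0).comp hF
    simpa [Function.comp_def, Real.sqrt_zero] using this
  exact squeeze_zero (fun k => Metric.infDist_nonneg) hbound hsq
end
end

section
/- Fix real numbers t and g. Let N : ℕ → ℕ with N(k) ≥ 3 for all k, and for each k let V^(k) : {1,…,N(k)} → ℝ be a potential, H_0^P(k) the corresponding linear Hamiltonian with periodic boundary conditions, and ψ^(k) ∈ ℂ^{N(k)} a normalized solution (∑_i |ψ^(k)_i|² = 1) of the stationary nonlinear Schrödinger equation with periodic boundary conditions and eigenenergy E^(k) ∈ ℝ. If U_max^(k) := max_i |ψ^(k)_i|² → 0 as k → ∞, then dist(E^(k), σ(H_0^P(k))) → 0 as k → ∞. -/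
open Matrix Filter

noncomputable section

lemma key_lemma {n : ℕ} [NeZero n] {A : Matrix (Fin n) (Fin n) ℂ} (hA : A.IsHermitian)
    (E : ℝ) (ψ : EuclideanSpace ℂ (Fin n)) (hψ : ‖ψ‖ = 1) :
    Metric.infDist E (Set.range hA.eigenvalues) ≤ ‖toEuclideanLin A ψ - (E : ℂ) • ψ‖ := by
  set b := hA.eigenvectorBasis with hb
  set r : EuclideanSpace ℂ (Fin n) := toEuclideanLin A ψ - (E : ℂ) • ψ with hr
  have hsymm : (toEuclideanLin A).IsSymmetric := (Matrix.isHermitian_iff_isSymmetric).1 hA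
  have hTb : ∀ j, toEuclideanLin A (b j) = (hA.eigenvalues j : ℂ) • (b j) := by
    intro j
    have := hA.mulVec_eigenvectorBasis j
    apply (WithLp.equiv 2 (Fin n → ℂ)).injective
    ext i
    simp only [WithLp.equiv_apply, Matrix.ofLp_toEuclideanLin_apply]
    have := congrFun this i
    simpa using this
  have hrepr : ∀ i, b.repr r i = ((hA.eigenvalues i : ℂ) - (E : ℂ)) * b.repr ψ i := by
    intro i
    have h1 : b.repr r i = inner ℂ (b i) r := b.repr_apply_apply r i
    have h2 : b.repr ψ i = inner ℂ (b i) ψ := b.repr_apply_apply ψ i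
    rw [h1, h2, hr]
    rw [inner_sub_right, inner_smul_right]
    have : (inner ℂ (b i) (toEuclideanLin A ψ) : ℂ) = (hA.eigenvalues i : ℂ) * inner ℂ (b i) ψ := by
      rw [← hsymm (b i) ψ, hTb i, inner_smul_left]
      simp [Complex.conj_ofReal]
    rw [this]; ring
  -- choose minimizing eigenvalue
  obtain ⟨i0, -, hi0⟩ := Finset.exists_min_image Finset.univ
    (fun i => |hA.eigenvalues i - E|) ⟨⟨0, Nat.pos_of_ne_zero (NeZero.ne n)⟩, Finset.mem_univ _⟩
  have hd : Metric.infDist E (Set.range hA.eigenvalues) ≤ |hA.eigenvalues i0 - E| := by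
    have := Metric.infDist_le_dist_of_mem (x := E) (Set.mem_range_self (f := hA.eigenvalues) i0)
    rwa [Real.dist_eq, abs_sub_comm] at this
  refine hd.trans ?_
  -- now show |λ i0 - E| ≤ ‖r‖
  have hnr : ‖r‖ ^ 2 = ∑ i, ‖b.repr r i‖ ^ 2 := by
    rw [← b.repr.norm_map r, EuclideanSpace.norm_eq, Real.sq_sqrt (by positivity)]
  have hnψ : ∑ i, ‖b.repr ψ i‖ ^ 2 = 1 := by
    have : ‖ψ‖ ^ 2 = ∑ i, ‖b.repr ψ i‖ ^ 2 := by
      rw [← b.repr.norm_map ψ, EuclideanSpace.norm_eq, Real.sq_sqrt (by positivity)]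
    rw [← this, hψ]; norm_num
  have hge : |hA.eigenvalues i0 - E| ^ 2 ≤ ‖r‖ ^ 2 := by
    rw [hnr]
    calc |hA.eigenvalues i0 - E| ^ 2
        = ∑ i, |hA.eigenvalues i0 - E| ^ 2 * ‖b.repr ψ i‖ ^ 2 := by
          rw [← Finset.mul_sum, hnψ, mul_one]
      _ ≤ ∑ i, ‖b.repr r i‖ ^ 2 := by
          apply Finset.sum_le_sum
          intro i _
          rw [hrepr i, norm_mul, mul_pow]
          have h1 : |hA.eigenvalues i0 - E| ≤ ‖((hA.eigenvalues i : ℂ) - (E : ℂ))‖ := by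
            have : ((hA.eigenvalues i : ℂ) - (E : ℂ)) = ((hA.eigenvalues i - E : ℝ) : ℂ) := by
              push_cast; ring
            rw [this, Complex.norm_real, Real.norm_eq_abs]
            exact hi0 i (Finset.mem_univ i)
          have := sq_le_sq' (by linarith [abs_nonneg (hA.eigenvalues i0 - E), norm_nonneg ((hA.eigenvalues i : ℂ) - (E : ℂ))]) h1
          exact mul_le_mul_of_nonneg_right this (by positivity)
  nlinarith [norm_nonneg r, abs_nonneg (hA.eigenvalues i0 - E)]

/-- Theorem 2 of the paper, periodic boundary conditions:
for a sequence of normalized periodic solutions with `U_max^(k) → 0`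
(critical or extended states), the distance of the eigenenergies to the spectrum
of the linear periodic Hamiltonian tends to zero. -/
theorem stmt_12 (t g : ℝ) (N : ℕ → ℕ) (hN : ∀ k, 3 ≤ N k)
    (V : ∀ k, Fin (N k) → ℝ) (ψ : ∀ k, Fin (N k) → ℂ) (E : ℕ → ℝ)
    (hH : ∀ k, (periodicH (N k) t (V k)).IsHermitian)
    (hnorm : ∀ k, Normalized (ψ k))
    (hsol : ∀ k, PeriodicNLS (N k) t g (V k) (ψ k) (E k))
    (hU : Tendsto (fun k => ⨆ i : Fin (N k), ‖ψ k i‖ ^ 2) atTop (nhds 0)) :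
    Tendsto (fun k => Metric.infDist (E k) (Set.range (hH k).eigenvalues)) atTop (nhds 0) := by
  set U : ℕ → ℝ := fun k => ⨆ i : Fin (N k), ‖ψ k i‖ ^ 2 with hUdef
  have hbdd : ∀ k, BddAbove (Set.range fun i : Fin (N k) => ‖ψ k i‖ ^ 2) :=
    fun k => (Set.finite_range _).bddAbove
  have hle : ∀ k (i : Fin (N k)), ‖ψ k i‖ ^ 2 ≤ U k :=
    fun k i => le_ciSup (hbdd k) i
  have hNpos : ∀ k, 0 < N k := fun k => lt_of_lt_of_le (by norm_num) (hN k)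
  have hU0 : ∀ k, 0 ≤ U k := fun k =>
    le_trans (by positivity) (hle k ⟨0, hNpos k⟩)
  -- bound each term
  have hbound : ∀ k, Metric.infDist (E k) (Set.range (hH k).eigenvalues) ≤ |g| * U k := by
    intro k
    haveI : NeZero (N k) := ⟨by have := hN k; omega⟩
    set φ : EuclideanSpace ℂ (Fin (N k)) := (WithLp.equiv 2 _).symm (ψ k) with hφ
    have hφnorm : ‖φ‖ = 1 := by
      rw [EuclideanSpace.norm_eq]
      have : ∀ i, ‖φ i‖ ^ 2 = ‖ψ k i‖ ^ 2 := by
        intro i; simp [hφ]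
      rw [Finset.sum_congr rfl fun i _ => this i, hnorm k]
      exact Real.sqrt_one
    have hmul : ∀ i, (periodicH (N k) t (V k) *ᵥ ψ k) i
        = (t : ℂ) * ψ k (pSucc i) + (t : ℂ) * ψ k (pPred i) + (V k i : ℂ) * ψ k i := by
      intro i
      have hne1 : pSucc i ≠ pPred i := by
        simp only [pSucc, pPred, Fin.ext_iff, ne_eq]
        intro h
        have h3 := hN k
        have hiN := i.isLt
        by_cases h1 : i.1 + 1 = N k
        · rw [h1, Nat.mod_self] at h
          have he : i.1 + (N k - 1) = N k + (N k - 2) := by omega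
          rw [he, Nat.add_mod_left, Nat.mod_eq_of_lt (by omega)] at h
          omega
        · rw [Nat.mod_eq_of_lt (by omega)] at h
          by_cases h2 : i.1 = 0
          · rw [Nat.mod_eq_of_lt (by omega)] at h
            omega
          · have he : i.1 + (N k - 1) = N k + (i.1 - 1) := by omega
            rw [he, Nat.add_mod_left, Nat.mod_eq_of_lt (by omega)] at h
            omega
      simp [periodicH, mulVec, dotProduct, add_mul, ite_mul, Finset.sum_add_distrib,
        Finset.sum_ite_eq']
    -- residual
    set r : EuclideanSpace ℂ (Fin (N k)) := toEuclideanLin (periodicH (N k) t (V k)) φ - ((E k : ℝ) : ℂ) • φ with hrd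
    have hri : ∀ i, r i = -((g : ℂ) * ((‖ψ k i‖ : ℂ)) ^ 2 * ψ k i) := by
      intro i
      have h1 : r i = (periodicH (N k) t (V k) *ᵥ ψ k) i - (E k : ℂ) * ψ k i := rfl
      rw [h1, hmul i]
      have := hsol k i
      have h2 : (t : ℂ) * ψ k (pSucc i) + (t : ℂ) * ψ k (pPred i)
          = (t : ℂ) * (ψ k (pSucc i) + ψ k (pPred i)) := by ring
      rw [h2]
      linear_combination this
    have hrnorm : ‖r‖ ≤ |g| * U k := by
      have h2 : ‖r‖ ^ 2 ≤ (|g| * U k) ^ 2 := by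
        rw [EuclideanSpace.norm_eq, Real.sq_sqrt (by positivity)]
        calc ∑ i, ‖r i‖ ^ 2 ≤ ∑ i, (|g| * U k) ^ 2 * ‖ψ k i‖ ^ 2 := by
              apply Finset.sum_le_sum
              intro i _
              rw [hri i]
              have : ‖-((g : ℂ) * ((‖ψ k i‖ : ℂ)) ^ 2 * ψ k i)‖
                  = |g| * ‖ψ k i‖ ^ 2 * ‖ψ k i‖ := by
                rw [norm_neg, norm_mul, norm_mul, norm_pow]
                simp [Complex.norm_real,
                  abs_nonneg]
              rw [this]
              have hA2 : ‖ψ k i‖ ^ 2 ≤ U k := hle k i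
              have h0 : (0 : ℝ) ≤ ‖ψ k i‖ := norm_nonneg _
              have h4 : (‖ψ k i‖ ^ 2) ^ 2 ≤ (U k) ^ 2 := by nlinarith [hU0 k]
              calc (|g| * ‖ψ k i‖ ^ 2 * ‖ψ k i‖) ^ 2
                  = |g| ^ 2 * ((‖ψ k i‖ ^ 2) ^ 2) * ‖ψ k i‖ ^ 2 := by
                    ring
                _ ≤ |g| ^ 2 * (U k) ^ 2 * ‖ψ k i‖ ^ 2 :=
                    mul_le_mul_of_nonneg_right
                      (mul_le_mul_of_nonneg_left h4 (by positivity)) (by positivity)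
                _ = (|g| * U k) ^ 2 * ‖ψ k i‖ ^ 2 := by ring
          _ = (|g| * U k) ^ 2 := by
              rw [← Finset.mul_sum, hnorm k, mul_one]
      have h3 : 0 ≤ |g| * U k := mul_nonneg (abs_nonneg g) (hU0 k)
      nlinarith [norm_nonneg r]
    calc Metric.infDist (E k) (Set.range (hH k).eigenvalues)
        ≤ ‖r‖ := key_lemma (hH k) (E k) φ hφnorm
      _ ≤ |g| * U k := hrnorm
  have hlim : Tendsto (fun k => |g| * U k) atTop (nhds 0) := by
    simpa using hU.const_mul |g|
  exact squeeze_zero (fun k => Metric.infDist_nonneg) hbound hlim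
end
end
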